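/- arXiv:2303.17037 — 10 statements merged into one kernel-verified Lean document; each statement's English description precedes it below -/
import Mathlib

section
/- Let α be a complex number and let v₁, v₂, v₃ be nonzero complex numbers. Define b₁ := -(e^{iπα}·v₂ + e^{-iπα}·v₃)/v₁, b₂ := -(v₁ + v₃)/(e^{iπα}·v₂), and b₃ := -(v₂ + v₁)/(e^{-iπα}·v₃). Then b₁ + b₂ + b₃ - b₁·b₂·b₃ = 2·cos(πα). -/
open Complex

/-- Stokes parameters built from nonzero boundary values `v₁, v₂, v₃` always
satisfy the Painlevé II Stokes constraint `b₁ + b₂ + b₃ - b₁b₂b₃ = 2cos(πα)`. -/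
theorem stokes_constraint (α v₁ v₂ v₃ : ℂ)
    (hv₁ : v₁ ≠ 0) (hv₂ : v₂ ≠ 0) (hv₃ : v₃ ≠ 0)
    (b₁ b₂ b₃ : ℂ)
    (hb₁ : b₁ = -(Complex.exp (Complex.I * Real.pi * α) * v₂ +
        Complex.exp (-(Complex.I * Real.pi * α)) * v₃) / v₁)
    (hb₂ : b₂ = -(v₁ + v₃) / (Complex.exp (Complex.I * Real.pi * α) * v₂))
    (hb₃ : b₃ = -(v₂ + v₁) / (Complex.exp (-(Complex.I * Real.pi * α)) * v₃)) :
    b₁ + b₂ + b₃ - b₁ * b₂ * b₃ = 2 * Complex.cos (Real.pi * α) := by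
  subst hb₁ hb₂ hb₃
  have hE : Complex.exp (Complex.I * Real.pi * α) ≠ 0 := Complex.exp_ne_zero _
  have hE' : Complex.exp (-(Complex.I * Real.pi * α)) ≠ 0 := Complex.exp_ne_zero _
  have hmul : Complex.exp (Complex.I * Real.pi * α) *
      Complex.exp (-(Complex.I * Real.pi * α)) = 1 := by
    rw [← Complex.exp_add]; ring_nf; exact Complex.exp_zero
  have hcos : Complex.cos ((Real.pi : ℂ) * α) =
      (Complex.exp (Complex.I * Real.pi * α) +
        Complex.exp (-(Complex.I * Real.pi * α))) / 2 := by
    rw [Complex.cos]; ring_nf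
  rw [hcos]
  field_simp
  ring_nf
  linear_combination (v₂ * v₃ * (-(v₁ + v₂) * Complex.exp (Complex.I * Real.pi * α) -
    (v₁ + v₃) * Complex.exp (-(Complex.I * Real.pi * α)))) * hmul
end

section
/- Let α be a complex number and let b₁, b₂, b₃ be complex numbers satisfying the constraint b₁ + b₂ + b₃ - b₁·b₂·b₃ = e^{iπα} + e^{-iπα}. If bᵢ ≠ e^{iπα} for every i ∈ {1,2,3}, then bᵢ ≠ e^{-iπα} for every i ∈ {1,2,3}, and moreover bᵢ·bⱼ ≠ 1 for every pair i ≠ j. -/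
open Complex

/-- If Stokes parameters `b 0, b 1, b 2` satisfy the constraint
`b₁ + b₂ + b₃ - b₁b₂b₃ = e^{iπα} + e^{-iπα}` and none of them equals `e^{iπα}`,
then none equals `e^{-iπα}` and no product of two of them equals `1`. -/
theorem stokes_nondegenerate (α : ℂ) (b : Fin 3 → ℂ)
    (hconstraint : b 0 + b 1 + b 2 - b 0 * b 1 * b 2 =
      Complex.exp (Complex.I * Real.pi * α) + Complex.exp (-(Complex.I * Real.pi * α)))
    (hne : ∀ i, b i ≠ Complex.exp (Complex.I * Real.pi * α)) :
    (∀ i, b i ≠ Complex.exp (-(Complex.I * Real.pi * α))) ∧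
      (∀ i j, i ≠ j → b i * b j ≠ 1) := by
  set x := Complex.exp (Complex.I * Real.pi * α) with hx
  set y := Complex.exp (-(Complex.I * Real.pi * α)) with hy
  have hxy : x * y = 1 := by
    rw [hx, hy, ← Complex.exp_add, add_neg_cancel, Complex.exp_zero]
  have key : ∀ a c d : ℂ, a + c + d - a * c * d = x + y → c ≠ x → d ≠ x → a ≠ y := by
    intro a c d h hc hd ha
    subst ha
    have h0 : (c - x) * (d - x) = 0 := by
      linear_combination (-x) * h + (-(c * d)) * hxy
    rcases mul_eq_zero.mp h0 with h1 | h1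
    · exact hc (sub_eq_zero.mp h1)
    · exact hd (sub_eq_zero.mp h1)
  have hny : ∀ i, b i ≠ y := by
    intro i
    fin_cases i
    · exact key (b 0) (b 1) (b 2) hconstraint (hne 1) (hne 2)
    · exact key (b 1) (b 0) (b 2) (by linear_combination hconstraint) (hne 0) (hne 2)
    · exact key (b 2) (b 0) (b 1) (by linear_combination hconstraint) (hne 0) (hne 1)
  refine ⟨hny, ?_⟩
  have key2 : ∀ a c : ℂ, a + c = x + y → a * c = 1 → a ≠ x → a ≠ y → False := by
    intro a c hsum hprod hax hay
    have h0 : (a - x) * (a - y) = 0 := by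
      linear_combination a * hsum - hprod + hxy
    rcases mul_eq_zero.mp h0 with h1 | h1
    · exact hax (sub_eq_zero.mp h1)
    · exact hay (sub_eq_zero.mp h1)
  intro i j hij hprod
  fin_cases i <;> fin_cases j
  · exact hij rfl
  · have hp : b 0 * b 1 = 1 := hprod
    exact key2 (b 0) (b 1) (by linear_combination hconstraint + (b 2) * hp) hp (hne 0) (hny 0)
  · have hp : b 0 * b 2 = 1 := hprod
    exact key2 (b 0) (b 2) (by linear_combination hconstraint + (b 1) * hp) hp (hne 0) (hny 0)
  · have hp : b 1 * b 0 = 1 := hprod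
    exact key2 (b 1) (b 0) (by linear_combination hconstraint + (b 2) * hp) hp (hne 1) (hny 1)
  · exact hij rfl
  · have hp : b 1 * b 2 = 1 := hprod
    exact key2 (b 1) (b 2) (by linear_combination hconstraint + (b 0) * hp) hp (hne 1) (hny 1)
  · have hp : b 2 * b 0 = 1 := hprod
    exact key2 (b 2) (b 0) (by linear_combination hconstraint + (b 1) * hp) hp (hne 2) (hny 2)
  · have hp : b 2 * b 1 = 1 := hprod
    exact key2 (b 2) (b 1) (by linear_combination hconstraint + (b 0) * hp) hp (hne 2) (hny 2)
  · exact hij rfl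
end

section
/- Let α be a complex number and let b₁, b₂, b₃ be complex numbers satisfying b₁ + b₂ + b₃ - b₁·b₂·b₃ = e^{iπα} + e^{-iπα}, and suppose that bᵢ ≠ e^{iπα} for every i ∈ {1,2,3} and that b₂·b₃ ≠ 1. Define v₂ := 1, v₁ := -(1 - b₂·b₃)/(1 - e^{-iπα}·b₃), and v₃ := (1 - e^{iπα}·b₂)/(1 - e^{-iπα}·b₃). Then v₁ and v₃ are well defined and nonzero, and b₁ = -(e^{iπα}·v₂ + e^{-iπα}·v₃)/v₁, b₂ = -(v₁ + v₃)/(e^{iπα}·v₂), b₃ = -(v₂ + v₁)/(e^{-iπα}·v₃). -/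
open Complex

/-- Every nondegenerate Stokes parameter triple `(b₁, b₂, b₃)` is realized by
boundary values `v₁, v₂, v₃` via the formulas (3.1) of the paper. -/
theorem stokes_realized (α b₁ b₂ b₃ : ℂ)
    (hconstraint : b₁ + b₂ + b₃ - b₁ * b₂ * b₃ =
      Complex.exp (Complex.I * Real.pi * α) + Complex.exp (-(Complex.I * Real.pi * α)))
    (hne₁ : b₁ ≠ Complex.exp (Complex.I * Real.pi * α))
    (hne₂ : b₂ ≠ Complex.exp (Complex.I * Real.pi * α))
    (hne₃ : b₃ ≠ Complex.exp (Complex.I * Real.pi * α))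
    (hprod : b₂ * b₃ ≠ 1)
    (v₁ v₂ v₃ : ℂ)
    (hv₂ : v₂ = 1)
    (hv₁ : v₁ = -(1 - b₂ * b₃) / (1 - Complex.exp (-(Complex.I * Real.pi * α)) * b₃))
    (hv₃ : v₃ = (1 - Complex.exp (Complex.I * Real.pi * α) * b₂) /
      (1 - Complex.exp (-(Complex.I * Real.pi * α)) * b₃)) :
    (1 - Complex.exp (-(Complex.I * Real.pi * α)) * b₃ ≠ 0) ∧ v₁ ≠ 0 ∧ v₃ ≠ 0 ∧
      b₁ = -(Complex.exp (Complex.I * Real.pi * α) * v₂ +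
        Complex.exp (-(Complex.I * Real.pi * α)) * v₃) / v₁ ∧
      b₂ = -(v₁ + v₃) / (Complex.exp (Complex.I * Real.pi * α) * v₂) ∧
      b₃ = -(v₂ + v₁) / (Complex.exp (-(Complex.I * Real.pi * α)) * v₃) := by
  set e := Complex.exp (Complex.I * Real.pi * α) with he
  set f := Complex.exp (-(Complex.I * Real.pi * α)) with hf
  have hef : e * f = 1 := by
    rw [he, hf, ← Complex.exp_add]
    simp
  have hd : 1 - f * b₃ ≠ 0 := by
    intro h
    apply hne₃
    have : b₃ = e * (f * b₃) := by rw [← mul_assoc, hef, one_mul]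
    rw [sub_eq_zero] at h
    rw [this, ← h, mul_one]
  have hnum : 1 - e * b₂ ≠ 0 := by
    intro h
    apply hne₁
    have hb₂ : b₂ = f := by
      have : b₂ = f * (e * b₂) := by
        rw [← mul_assoc, mul_comm f e, hef, one_mul]
      rw [sub_eq_zero] at h
      rw [this, ← h, mul_one]
    -- b₁ * (1 - f * b₃) = e * (1 - f * b₃)
    have key : (b₁ - e) * (1 - f * b₃) = 0 := by
      subst hb₂
      linear_combination hconstraint + b₃ * hef
    rcases mul_eq_zero.mp key with h' | h'
    · exact sub_eq_zero.mp h'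
    · exact absurd h' hd
  have hv₁ne : v₁ ≠ 0 := by
    rw [hv₁]
    apply div_ne_zero _ hd
    intro h
    apply hprod
    have := neg_eq_zero.mp h
    rw [sub_eq_zero] at this
    exact this.symm
  have hv₃ne : v₃ ≠ 0 := by
    rw [hv₃]
    exact div_ne_zero hnum hd
  have hene : e ≠ 0 := Complex.exp_ne_zero _
  have hfne : f ≠ 0 := Complex.exp_ne_zero _
  have hp : b₂ * b₃ - 1 ≠ 0 := sub_ne_zero.mpr hprod
  refine ⟨hd, hv₁ne, hv₃ne, ?_, ?_, ?_⟩
  · rw [hv₁, hv₂, hv₃]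
    field_simp
    linear_combination hconstraint + (b₂ + b₃) * hef
  · rw [hv₁, hv₂, hv₃]
    have hd' : 1 - b₃ * f ≠ 0 := by rwa [mul_comm]
    field_simp [hd']
    linear_combination (-(b₂*b₃)) * hef
  · rw [hv₁, hv₂, hv₃]
    have hd' : 1 - b₃ * f ≠ 0 := by rwa [mul_comm]
    have hnum' : 1 - b₂ * e ≠ 0 := by rwa [mul_comm]
    field_simp [hd', hnum']
    linear_combination (-(b₂*b₃)) * hef
end

section
/- Let a₀, a₁, a₂, a₃ be complex numbers and let r > max{|a₀|, |a₁|, |a₂|, |a₃|}. Suppose w : ℂ → ℂ is holomorphic on {z : |z| > r} and satisfies w(z)² = (z - a₀)(z - a₁)(z - a₂)(z - a₃) there, together with w(z)/z² → 1 as z → ∞. Then for every R > r, (1/(2πi)) ∮_{|z|=R} (z - a₀)/w(z) dz = 1, where the circle |z| = R is traversed counterclockwise. -/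
open Complex Filter Metric

set_option maxHeartbeats 1000000

/-- The residue computation (4.7): for the branch `w` of the square root of the
quartic `(z-a₀)(z-a₁)(z-a₂)(z-a₃)` holomorphic outside a disk containing all
branch points and normalized by `w(z)/z² → 1` at infinity, the counterclockwise
contour integral of `(z-a₀)/w(z)` over any circle `|z| = R`, `R > r`, divided by
`2πi`, equals `1`. -/
theorem residue_quartic (a₀ a₁ a₂ a₃ : ℂ) (r : ℝ)
    (hr₀ : ‖a₀‖ < r) (hr₁ : ‖a₁‖ < r)
    (hr₂ : ‖a₂‖ < r) (hr₃ : ‖a₃‖ < r)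
    (w : ℂ → ℂ)
    (hw : DifferentiableOn ℂ w {z : ℂ | r < ‖z‖})
    (hsq : ∀ z : ℂ, r < ‖z‖ →
      (w z) ^ 2 = (z - a₀) * (z - a₁) * (z - a₂) * (z - a₃))
    (hlim : Tendsto (fun z : ℂ => w z / z ^ 2) (Bornology.cobounded ℂ) (nhds 1)) :
    ∀ R : ℝ, r < R →
      (1 / (2 * Real.pi * Complex.I)) * (∮ z in C(0, R), (z - a₀) / w z) = 1 := by
  have hrpos : 0 < r := (norm_nonneg a₀).trans_lt hr₀
  have hUopen : IsOpen {z : ℂ | r < ‖z‖} :=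
    isOpen_lt continuous_const continuous_norm
  -- triangle-type helpers
  have tri3 : ∀ x y u : ℂ, ‖x + y - u‖
      ≤ ‖x‖ + ‖y‖ + ‖u‖ := by
    intro x y u
    calc ‖x + y - u‖ ≤ ‖x + y‖ + ‖u‖ := by
          simpa [sub_eq_add_neg] using norm_add_le (x + y) (-u)
      _ ≤ _ := by linarith [norm_add_le x y]
  have tri3' : ∀ x y u : ℂ, ‖x‖ - ‖y‖ - ‖u‖
      ≤ ‖x + y - u‖ := by
    intro x y u
    have : ‖x‖ = ‖(x + y - u) + u - y‖ := by ring_nf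
    rw [this]
    linarith [tri3 (x + y - u) u y]
  -- w is nonzero on the region
  have hwne : ∀ z : ℂ, r < ‖z‖ → w z ≠ 0 := by
    intro z hz h0
    have h := hsq z hz
    rw [h0] at h
    have h' : (z - a₀) * (z - a₁) * (z - a₂) * (z - a₃) = 0 := by rw [← h]; ring
    rcases mul_eq_zero.mp h' with h1 | h1
    · rcases mul_eq_zero.mp h1 with h2 | h2
      · rcases mul_eq_zero.mp h2 with h3 | h3
        · rw [sub_eq_zero] at h3; rw [h3] at hz; linarith
        · rw [sub_eq_zero] at h3; rw [h3] at hz; linarith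
      · rw [sub_eq_zero] at h2; rw [h2] at hz; linarith
    · rw [sub_eq_zero] at h1; rw [h1] at hz; linarith
  set f : ℂ → ℂ := fun z => (z - a₀) / w z with hf
  -- f is differentiable on the region
  have hfd : ∀ z : ℂ, r < ‖z‖ → DifferentiableAt ℂ f z := by
    intro z hz
    have hwz : DifferentiableAt ℂ w z :=
      (hw z hz).differentiableAt (hUopen.mem_nhds hz)
    exact (differentiableAt_id.sub_const a₀).div hwz (hwne z hz)
  -- annulus: integral independent of radius
  have hann : ∀ R ρ : ℝ, r < R → R ≤ ρ →
      (∮ z in C(0, ρ), f z) = ∮ z in C(0, R), f z := by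
    intro R ρ hR hle
    refine Complex.circleIntegral_eq_of_differentiable_on_annulus_off_countable
      (hrpos.trans hR) hle (Set.countable_empty) ?_ ?_
    · intro z hz
      have h2 := hz.2
      rw [mem_ball, Complex.dist_eq, sub_zero] at h2
      push_neg at h2
      exact (hfd z (by linarith)).continuousAt.continuousWithinAt
    · intro z hz
      have h2 := hz.1.2
      rw [mem_closedBall, Complex.dist_eq, sub_zero] at h2
      push_neg at h2
      exact hfd z (by linarith)
  -- eventual bound from the normalization
  obtain ⟨M₁, hM₁⟩ : ∃ M, ∀ z : ℂ, M ≤ ‖z‖ →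
      ‖w z / z ^ 2 - 1‖ < 1/4 := by
    have h := Metric.tendsto_nhds.mp hlim (1/4) (by norm_num)
    rw [← comap_norm_atTop, Filter.eventually_comap, Filter.eventually_atTop] at h
    refine ⟨h.choose, fun z hz => ?_⟩
    have := h.choose_spec (‖z‖) hz z rfl
    rwa [Complex.dist_eq] at this
  set B : ℝ := ‖a₀ - a₁ - a₂ - a₃‖ + ‖a₁*a₂ + a₁*a₃ + a₂*a₃‖
      + ‖a₁*a₂*a₃‖ + 1 with hB
  have hBpos : 0 < B := by positivity
  set M : ℝ := max (max (max M₁ 1) (4 * (‖a₀‖ + 1))) (r + 1) with hM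
  have hM1 : (1:ℝ) ≤ M := le_max_of_le_left (le_max_of_le_left (le_max_right _ _))
  have hMr : r < M := lt_of_lt_of_le (by linarith) (le_max_right _ _)
  -- the key pointwise estimate
  have key : ∀ z : ℂ, M ≤ ‖z‖ →
      ‖f z - z⁻¹‖ ≤ 2 * B / (‖z‖) ^ 2 := by
    intro z hzM
    set s : ℝ := ‖z‖ with hs
    have hs1 : (1:ℝ) ≤ s := hM1.trans hzM
    have hsr : r < s := hMr.trans_le hzM
    have hsa : 4 * (‖a₀‖ + 1) ≤ s :=
      le_trans (le_max_of_le_left (le_max_right _ _)) hzM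
    have hsM₁ : M₁ ≤ s :=
      le_trans (le_max_of_le_left (le_max_of_le_left (le_max_left _ _))) hzM
    have hs0 : (0:ℝ) < s := by linarith
    have hzne : z ≠ 0 := by
      intro h
      have : s = 0 := by simp [hs, h]
      linarith
    have hwz : w z ≠ 0 := hwne z hsr
    have hs2 : (0:ℝ) ≤ s ^ 2 := sq_nonneg s
    -- |w z - z²| ≤ s²/4
    have h1 : ‖w z - z ^ 2‖ ≤ s ^ 2 / 4 := by
      have he : w z - z ^ 2 = (w z / z ^ 2 - 1) * z ^ 2 := by
        field_simp
      rw [he, norm_mul, norm_pow, ← hs]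
      have ht := (hM₁ z hsM₁).le
      nlinarith [mul_le_mul_of_nonneg_right ht hs2]
    -- |w z| ≥ (3/4) s²
    have h2 : (3/4) * s ^ 2 ≤ ‖w z‖ := by
      have t := tri3' (z ^ 2) (w z - z ^ 2) 0
      simp only [norm_zero, sub_zero] at t
      have t2 : z ^ 2 + (w z - z ^ 2) = w z := by ring
      rw [t2, norm_pow, ← hs] at t
      linarith
    -- |w z + z(z-a₀)| ≥ (3/2) s²
    have ha₀s : ‖a₀‖ ≤ s / 4 := by linarith
    have h3 : (3/2) * s ^ 2 ≤ ‖w z + z * (z - a₀)‖ := by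
      have t := tri3' (2 * z ^ 2) (w z - z ^ 2) (a₀ * z)
      have t2 : 2 * z ^ 2 + (w z - z ^ 2) - a₀ * z = w z + z * (z - a₀) := by ring
      rw [t2] at t
      have t3 : ‖2 * z ^ 2‖ = 2 * s ^ 2 := by
        rw [norm_mul, norm_pow, ← hs]; simp
      have t4 : ‖a₀ * z‖ ≤ (s/4) * s := by
        rw [norm_mul, ← hs]
        exact mul_le_mul_of_nonneg_right ha₀s hs0.le
      nlinarith
    -- |Q| ≤ B s²
    set Q : ℂ := (z - a₁) * (z - a₂) * (z - a₃) - z ^ 2 * (z - a₀) with hQ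
    have h4 : ‖Q‖ ≤ B * s ^ 2 := by
      have he : Q = (a₀ - a₁ - a₂ - a₃) * z ^ 2 + (a₁*a₂ + a₁*a₃ + a₂*a₃) * z
          - a₁*a₂*a₃ := by rw [hQ]; ring
      rw [he]
      have htr := tri3 ((a₀ - a₁ - a₂ - a₃) * z ^ 2) ((a₁*a₂ + a₁*a₃ + a₂*a₃) * z) (a₁*a₂*a₃)
      rw [norm_mul, norm_mul, norm_pow, ← hs] at htr
      have e1 : s ≤ s ^ 2 := by nlinarith
      have e2 : (1:ℝ) ≤ s ^ 2 := by nlinarith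
      have b1 : ‖a₁*a₂ + a₁*a₃ + a₂*a₃‖ * s
          ≤ ‖a₁*a₂ + a₁*a₃ + a₂*a₃‖ * s ^ 2 :=
        mul_le_mul_of_nonneg_left e1 (norm_nonneg _)
      have b2 : ‖a₁*a₂*a₃‖ ≤ ‖a₁*a₂*a₃‖ * s ^ 2 :=
        le_mul_of_one_le_right (norm_nonneg _) e2
      rw [hB]
      nlinarith [norm_nonneg (a₀ - a₁ - a₂ - a₃), htr, b1, b2, hs2]
    -- |w z - z(z-a₀)| ≤ (4B/3) s
    have h5 : ‖w z - z * (z - a₀)‖ ≤ (4 * B / 3) * s := by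
      have hid : (w z - z * (z - a₀)) * (w z + z * (z - a₀)) = (z - a₀) * Q := by
        rw [hQ]
        linear_combination hsq z hsr
      have habs : ‖w z - z * (z - a₀)‖ * ‖w z + z * (z - a₀)‖
          = ‖z - a₀‖ * ‖Q‖ := by
        rw [← norm_mul, ← norm_mul, hid]
      have hza₀ : ‖z - a₀‖ ≤ 2 * s := by
        have h := norm_add_le z (-a₀)
        rw [norm_neg, ← hs] at h
        rw [sub_eq_add_neg]
        linarith
      have hnum : ‖z - a₀‖ * ‖Q‖ ≤ 2 * s * (B * s ^ 2) :=
        mul_le_mul hza₀ h4 (norm_nonneg Q) (by positivity)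
      have hA0 := norm_nonneg (w z - z * (z - a₀))
      have step : ‖w z - z * (z - a₀)‖ * ((3/2) * s ^ 2)
          ≤ 2 * s * (B * s ^ 2) := by
        calc ‖w z - z * (z - a₀)‖ * ((3/2) * s ^ 2)
            ≤ ‖w z - z * (z - a₀)‖ * ‖w z + z * (z - a₀)‖ :=
              mul_le_mul_of_nonneg_left h3 hA0
          _ = ‖z - a₀‖ * ‖Q‖ := habs
          _ ≤ 2 * s * (B * s ^ 2) := hnum
      have hs2pos : (0:ℝ) < (3/2) * s ^ 2 := by positivity
      rw [← le_div_iff₀ hs2pos] at step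
      calc ‖w z - z * (z - a₀)‖ ≤ 2 * s * (B * s ^ 2) / ((3/2) * s ^ 2) := step
        _ = (4 * B / 3) * s := by field_simp; ring
    -- conclude
    have he : f z - z⁻¹ = (z * (z - a₀) - w z) / (z * w z) := by
      rw [hf]
      field_simp
    rw [he, norm_div, norm_mul, ← hs]
    have hnum : ‖z * (z - a₀) - w z‖ ≤ (4 * B / 3) * s := by
      rw [← norm_neg]
      have e : -(z * (z - a₀) - w z) = w z - z * (z - a₀) := by ring
      rw [e]; exact h5
    have hden : (3/4) * s ^ 3 ≤ s * ‖w z‖ := by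
      have := mul_le_mul_of_nonneg_left h2 hs0.le
      nlinarith
    have hdenpos : (0:ℝ) < s * ‖w z‖ := by nlinarith
    rw [div_le_div_iff₀ hdenpos (by positivity : (0:ℝ) < s ^ 2)]
    have hs3 : (0:ℝ) ≤ s ^ 3 := by positivity
    calc ‖z * (z - a₀) - w z‖ * s ^ 2 ≤ ((4 * B / 3) * s) * s ^ 2 :=
          mul_le_mul_of_nonneg_right hnum hs2
      _ ≤ 2 * B * ((3/4) * s ^ 3) := by nlinarith [mul_nonneg hBpos.le hs3]
      _ ≤ 2 * B * (s * ‖w z‖) :=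
          mul_le_mul_of_nonneg_left hden (by positivity)
  -- main limit argument
  intro R hR
  set I₀ : ℂ := ∮ z in C(0, R), f z with hI₀
  have hbound : ∀ ρ : ℝ, max M R ≤ ρ →
      ‖I₀ - 2 * Real.pi * Complex.I‖ ≤ 2 * Real.pi * (2 * B) / ρ := by
    intro ρ hρ
    have hρM : M ≤ ρ := le_trans (le_max_left _ _) hρ
    have hρR : R ≤ ρ := le_trans (le_max_right _ _) hρ
    have hρ1 : (1:ℝ) ≤ ρ := hM1.trans hρM
    have hρ0 : (0:ℝ) < ρ := by linarith
    have hρr : r < ρ := hMr.trans_le hρM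
    have e1 : (∮ z in C(0, ρ), f z) = I₀ := hann R ρ hR hρR
    have e2 : (∮ z in C(0, ρ), z⁻¹) = 2 * Real.pi * Complex.I := by
      have h0 : (0:ℂ) ∈ ball (0:ℂ) ρ := by simpa using hρ0
      have := circleIntegral.integral_sub_inv_of_mem_ball h0
      simpa using this
    have hif : CircleIntegrable f 0 ρ := by
      apply ContinuousOn.circleIntegrable hρ0.le
      intro z hz
      have hzρ : ‖z‖ = ρ := by simpa [Complex.dist_eq] using hz
      exact (hfd z (by rw [hzρ]; exact hρr)).continuousAt.continuousWithinAt
    have hii : CircleIntegrable (fun z : ℂ => z⁻¹) 0 ρ := by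
      apply ContinuousOn.circleIntegrable hρ0.le
      intro z hz
      have hzρ : ‖z‖ = ρ := by simpa [Complex.dist_eq] using hz
      have hz0 : z ≠ 0 := by
        intro h; rw [h] at hzρ; simp at hzρ; linarith
      exact (continuousAt_inv₀ hz0).continuousWithinAt
    have e3 : (∮ z in C(0, ρ), (f z - z⁻¹)) = I₀ - 2 * Real.pi * Complex.I := by
      rw [circleIntegral.integral_sub hif hii, e1, e2]
    rw [← e3]
    have hC : ∀ z ∈ sphere (0:ℂ) ρ, ‖f z - z⁻¹‖ ≤ 2 * B / ρ ^ 2 := by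
      intro z hz
      have hzρ : ‖z‖ = ρ := by simpa [Complex.dist_eq] using hz
      have := key z (by rw [hzρ]; exact hρM)
      rw [hzρ] at this
      simpa using this
    calc ‖∮ z in C(0, ρ), (f z - z⁻¹)‖ ≤ 2 * Real.pi * ρ * (2 * B / ρ ^ 2) :=
          circleIntegral.norm_integral_le_of_norm_le_const hρ0.le hC
      _ = 2 * Real.pi * (2 * B) / ρ := by field_simp
  have hI : I₀ = 2 * Real.pi * Complex.I := by
    have htend : Tendsto (fun ρ : ℝ => 2 * Real.pi * (2 * B) / ρ) atTop (nhds 0) :=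
      tendsto_const_nhds.div_atTop tendsto_id
    have hle : ‖I₀ - 2 * Real.pi * Complex.I‖ ≤ 0 := by
      refine ge_of_tendsto htend ?_
      filter_upwards [eventually_ge_atTop (max M R)] with ρ hρ
      exact hbound ρ hρ
    have := norm_le_zero_iff.mp hle
    linear_combination this
  rw [hI, one_div, inv_mul_cancel₀]
  exact mul_ne_zero (mul_ne_zero two_ne_zero
    (Complex.ofReal_ne_zero.mpr Real.pi_ne_zero)) Complex.I_ne_zero
end

section
/- Let ν, s₀ be complex numbers and let q be analytic on a punctured disk {s : 0 < |s - s₀| < δ}, satisfying the Painlevé II equation q''(s) = s·q(s) + 2·q(s)³ - ν there. Suppose q has a pole at s₀, i.e., q is given near s₀ by a convergent Laurent series q(s) = Σ_{k ≥ -m} c_k·(s - s₀)^k with m ≥ 1 and c_{-m} ≠ 0. Then m = 1 (the pole is simple) and the residue c_{-1} equals 1 or -1. -/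
open Complex
open Filter Topology

lemma PII_aux_exists_analytic (s₀ : ℂ) (r : ℝ) (hr : 0 < r) (a : ℕ → ℂ) (w : ℂ → ℂ)
    (h : ∀ s : ℂ, 0 < ‖s - s₀‖ → ‖s - s₀‖ < 2 * r →
      HasSum (fun n : ℕ => a n * (s - s₀) ^ n) (w s)) :
    ∃ F : ℂ → ℂ, AnalyticOnNhd ℂ F (Metric.ball s₀ r) ∧ F s₀ = a 0 ∧
      ∀ s ∈ Metric.ball s₀ r, s ≠ s₀ → F s = w s := by
  set p : FormalMultilinearSeries ℂ ℂ ℂ := FormalMultilinearSeries.ofScalars ℂ a with hp_def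
  have hrad : ((r : ℝ).toNNReal : ENNReal) ≤ p.radius := by
    apply p.le_radius_of_summable_norm
    have h1 : (0 : ℝ) < ‖(s₀ + (r : ℝ)) - s₀‖ := by
      simpa [abs_of_pos hr] using hr
    have h2 : ‖(s₀ + (r : ℝ)) - s₀‖ < 2 * r := by
      simp only [add_sub_cancel_left, Complex.norm_real, Real.norm_eq_abs]
      rw [abs_of_pos hr]; linarith
    have hsm := (h _ h1 h2).summable.norm
    refine hsm.congr fun n => ?_
    rw [hp_def, FormalMultilinearSeries.ofScalars_norm]
    simp [norm_mul, norm_pow, abs_of_pos hr, Real.coe_toNNReal _ hr.le]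
  have hrpos : 0 < p.radius :=
    lt_of_lt_of_le (by simp [Real.toNNReal_pos.mpr hr]) hrad
  have hball := p.hasFPowerSeriesOnBall hrpos
  have hsumAnal : AnalyticOnNhd ℂ p.sum (Metric.eball 0 p.radius) := hball.analyticOnNhd
  have hmem : ∀ s ∈ Metric.ball s₀ r, s - s₀ ∈ Metric.eball (0 : ℂ) p.radius := by
    intro s hs
    rw [Metric.mem_eball, edist_zero_right]
    refine lt_of_lt_of_le ?_ hrad
    have h1 : ‖s - s₀‖₊ < r.toNNReal := by
      rw [← NNReal.coe_lt_coe, coe_nnnorm, Real.coe_toNNReal _ hr.le]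
      rw [← dist_eq_norm]
      exact Metric.mem_ball.mp hs
    exact_mod_cast ENNReal.coe_lt_coe.mpr h1
  refine ⟨fun s => p.sum (s - s₀), ?_, ?_, ?_⟩
  · intro s hs
    have h1 : AnalyticAt ℂ p.sum (s - s₀) := hsumAnal _ (hmem s hs)
    have h2 : AnalyticAt ℂ (fun s' : ℂ => s' - s₀) s :=
      (analyticAt_id).sub analyticAt_const
    have h3 : AnalyticAt ℂ (p.sum ∘ fun s' : ℂ => s' - s₀) s :=
      AnalyticAt.comp (f := fun s' : ℂ => s' - s₀) (x := s) h1 h2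
    exact h3
  · show p.sum (s₀ - s₀) = a 0
    rw [sub_self]
    have := FormalMultilinearSeries.ofScalarsSum_zero (E := ℂ) (c := a)
    rw [FormalMultilinearSeries.ofScalarsSum] at this
    rw [hp_def, this, smul_eq_mul, mul_one]
  · intro s hs hne
    have h1 : 0 < ‖s - s₀‖ := by
      simpa [norm_pos_iff] using sub_ne_zero.mpr hne
    have h2 : ‖s - s₀‖ < 2 * r := by
      have := Metric.mem_ball.mp hs
      rw [Complex.dist_eq] at this
      linarith
    have H1 := h s h1 h2
    have H2 : HasSum (fun n : ℕ => a n * (s - s₀) ^ n) (p.sum (s - s₀)) := by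
      have := p.hasSum (hmem s hs)
      refine this.congr_fun fun n => ?_
      rw [hp_def, FormalMultilinearSeries.ofScalars_apply_eq, smul_eq_mul]
    exact H2.unique H1

lemma PII_aux_identity (k : ℕ) (T A Bv C s ν : ℂ) (ht : T ≠ 0) :
    ((k : ℂ) + 1) * ((k : ℂ) + 2) * T ^ (2 * k) * A
      - 2 * ((k : ℂ) + 1) * T ^ (2 * k + 1) * Bv
      + T ^ (2 * k + 2) * C
      - s * T ^ (2 * k + 2) * A
      - 2 * A ^ 3
      + ν * T ^ (3 * k + 3)
    = T ^ (3 * k + 3) *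
      ((-((k : ℂ) + 1)) * ((-((k : ℂ) + 1)) - 1) * (T ^ (k + 3))⁻¹ * A
        + 2 * (-((k : ℂ) + 1)) * (T ^ (k + 2))⁻¹ * Bv
        + (T ^ (k + 1))⁻¹ * C
        - (s * ((T ^ (k + 1))⁻¹ * A) + 2 * ((T ^ (k + 1))⁻¹ * A) ^ 3 - ν)) := by
  have e1 : T ^ (3 * k + 3) * (T ^ (k + 3))⁻¹ = T ^ (2 * k) := by
    rw [show 3 * k + 3 = 2 * k + (k + 3) by ring, pow_add,
      mul_inv_cancel_right₀ (pow_ne_zero _ ht)]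
  have e2 : T ^ (3 * k + 3) * (T ^ (k + 2))⁻¹ = T ^ (2 * k + 1) := by
    rw [show 3 * k + 3 = (2 * k + 1) + (k + 2) by ring, pow_add,
      mul_inv_cancel_right₀ (pow_ne_zero _ ht)]
  have e3 : T ^ (3 * k + 3) * (T ^ (k + 1))⁻¹ = T ^ (2 * k + 2) := by
    rw [show 3 * k + 3 = (2 * k + 2) + (k + 1) by ring, pow_add,
      mul_inv_cancel_right₀ (pow_ne_zero _ ht)]
  have e4 : T ^ (3 * k + 3) * ((T ^ (k + 1))⁻¹) ^ 3 = 1 := by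
    rw [show 3 * k + 3 = (k + 1) * 3 by ring, pow_mul, ← mul_pow,
      mul_inv_cancel₀ (pow_ne_zero _ ht), one_pow]
  calc ((k : ℂ) + 1) * ((k : ℂ) + 2) * T ^ (2 * k) * A
      - 2 * ((k : ℂ) + 1) * T ^ (2 * k + 1) * Bv
      + T ^ (2 * k + 2) * C
      - s * T ^ (2 * k + 2) * A
      - 2 * A ^ 3
      + ν * T ^ (3 * k + 3)
      = ((k : ℂ) + 1) * ((k : ℂ) + 2) * (T ^ (3 * k + 3) * (T ^ (k + 3))⁻¹) * A
      - 2 * ((k : ℂ) + 1) * (T ^ (3 * k + 3) * (T ^ (k + 2))⁻¹) * Bv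
      + (T ^ (3 * k + 3) * (T ^ (k + 1))⁻¹) * C
      - s * (T ^ (3 * k + 3) * (T ^ (k + 1))⁻¹) * A
      - 2 * (T ^ (3 * k + 3) * ((T ^ (k + 1))⁻¹) ^ 3) * A ^ 3
      + ν * T ^ (3 * k + 3) := by rw [e1, e2, e3, e4]; ring
    _ = _ := by ring

/-- Any pole of a Painlevé II transcendent is simple with residue `±1`:
if `q` is given on a punctured disk around `s₀` by a convergent Laurent
series with leading term `c₋ₘ (s - s₀)^{-m}`, `m ≥ 1`, `c₋ₘ ≠ 0`, and `q`
solves `q'' = s q + 2 q³ - ν` there, then `m = 1` and `c₋₁ ∈ {1, -1}`. -/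
theorem PII_pole_simple_residue (ν s₀ : ℂ) (δ : ℝ) (hδ : 0 < δ)
    (q q' q'' : ℂ → ℂ) (m : ℕ) (hm : 1 ≤ m) (c : ℤ → ℂ)
    (hc_bot : ∀ k : ℤ, k < -(m : ℤ) → c k = 0)
    (hc_lead : c (-(m : ℤ)) ≠ 0)
    (hsum : ∀ s : ℂ, 0 < ‖s - s₀‖ → ‖s - s₀‖ < δ →
      HasSum (fun k : ℤ => c k * (s - s₀) ^ k) (q s))
    (hq : ∀ s : ℂ, 0 < ‖s - s₀‖ → ‖s - s₀‖ < δ →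
      HasDerivAt q (q' s) s)
    (hq' : ∀ s : ℂ, 0 < ‖s - s₀‖ → ‖s - s₀‖ < δ →
      HasDerivAt q' (q'' s) s)
    (hPII : ∀ s : ℂ, 0 < ‖s - s₀‖ → ‖s - s₀‖ < δ →
      q'' s = s * q s + 2 * (q s) ^ 3 - ν) :
    m = 1 ∧ (c (-1) = 1 ∨ c (-1) = -1) := by
  obtain ⟨k, rfl⟩ : ∃ k, m = k + 1 := ⟨m - 1, by omega⟩
  set a : ℕ → ℂ := fun n => c ((n : ℤ) - ((k : ℤ) + 1)) with ha_def
  -- step 1 : shifted power series sums to (s - s₀)^(k+1) * q s on the punctured disk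
  have key : ∀ s : ℂ, 0 < ‖s - s₀‖ → ‖s - s₀‖ < δ →
      HasSum (fun n : ℕ => a n * (s - s₀) ^ n) ((s - s₀) ^ (k + 1) * q s) := by
    intro s h1 h2
    have ht : s - s₀ ≠ 0 := fun h => by simp [h] at h1
    have H := (hsum s h1 h2).mul_right ((s - s₀) ^ (k + 1))
    rw [mul_comm]
    set g : ℕ → ℤ := fun n => (n : ℤ) - ((k : ℤ) + 1) with hg
    have hginj : Function.Injective g := by intro x y hxy; simp only [hg] at hxy; omega
    have hzero : ∀ j : ℤ, j ∉ Set.range g →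
        c j * (s - s₀) ^ j * (s - s₀) ^ (k + 1) = 0 := by
      intro j hj
      have hjlt : j < -((k : ℤ) + 1) := by
        by_contra hle
        exact hj ⟨(j + ((k : ℤ) + 1)).toNat, by simp only [hg]; omega⟩
      rw [hc_bot j (by push_cast; omega), zero_mul, zero_mul]
    have H2 := (hginj.hasSum_iff hzero).mpr H
    refine H2.congr_fun fun n => ?_
    show a n * (s - s₀) ^ n = c (g n) * (s - s₀) ^ (g n) * (s - s₀) ^ (k + 1)
    rw [mul_assoc]
    congr 1
    rw [← zpow_natCast (s - s₀) (k + 1), ← zpow_add₀ ht,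
      show g n + ((k + 1 : ℕ) : ℤ) = (n : ℤ) by simp only [hg]; push_cast; ring,
      zpow_natCast]
  have hδ2 : (0 : ℝ) < δ / 2 := by linarith
  obtain ⟨F, hFanal, hFa0, hFW⟩ :=
    PII_aux_exists_analytic s₀ (δ / 2) hδ2 a (fun s => (s - s₀) ^ (k + 1) * q s)
      (fun s h1 h2 => key s h1 (by linarith))
  set B := Metric.ball s₀ (δ / 2) with hB_def
  have hF'anal : AnalyticOnNhd ℂ (deriv F) B := hFanal.deriv
  have hF''anal : AnalyticOnNhd ℂ (deriv (deriv F)) B := hF'anal.deriv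
  have hBsub : ∀ s ∈ B, s ≠ s₀ → 0 < ‖s - s₀‖ ∧ ‖s - s₀‖ < δ := by
    intro s hs hne
    constructor
    · simpa [norm_pos_iff] using sub_ne_zero.mpr hne
    · have := Metric.mem_ball.mp hs
      rw [Complex.dist_eq] at this
      linarith
  have hqF : ∀ s ∈ B, s ≠ s₀ → (s - s₀) ^ (k + 1) * q s = F s :=
    fun s hs hne => (hFW s hs hne).symm
  have hFs₀ : F s₀ = c (-((k : ℤ) + 1)) := by
    rw [hFa0, ha_def]; norm_num
  have hFs₀ne : F s₀ ≠ 0 := by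
    rw [hFs₀, show -((k : ℤ) + 1) = -(((k + 1 : ℕ) : ℤ)) by push_cast; ring]
    exact hc_lead
  -- step 2 : derivatives of q on the punctured ball
  set N : ℤ := -((k : ℤ) + 1) with hN_def
  set U : Set ℂ := B \ {s₀} with hU_def
  have hUopen : IsOpen U := Metric.isOpen_ball.sdiff isClosed_singleton
  have htne : ∀ s ∈ U, s - s₀ ≠ 0 := fun s hs => sub_ne_zero.mpr hs.2
  have hzpow : ∀ j : ℤ, ∀ s ∈ U,
      HasDerivAt (fun s' : ℂ => (s' - s₀) ^ j) ((j : ℂ) * (s - s₀) ^ (j - 1)) s := by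
    intro j s hs
    have hsub : HasDerivAt (fun s' : ℂ => s' - s₀) 1 s := (hasDerivAt_id s).sub_const s₀
    have hpow := (hasDerivAt_zpow j (s - s₀) (Or.inl (htne s hs))).comp s hsub
    simpa [Function.comp_def] using hpow
  have hFdiff : ∀ s ∈ B, HasDerivAt F (deriv F s) s :=
    fun s hs => (hFanal s hs).differentiableAt.hasDerivAt
  have hF'diff : ∀ s ∈ B, HasDerivAt (deriv F) (deriv (deriv F) s) s :=
    fun s hs => (hF'anal s hs).differentiableAt.hasDerivAt
  set G₀ : ℂ → ℂ := fun s => (s - s₀) ^ N * F s with hG₀_def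
  set G₁ : ℂ → ℂ := fun s =>
    (N : ℂ) * (s - s₀) ^ (N - 1) * F s + (s - s₀) ^ N * deriv F s with hG₁_def
  set G₂ : ℂ → ℂ := fun s =>
    (N : ℂ) * ((N : ℂ) - 1) * (s - s₀) ^ (N - 2) * F s
      + 2 * (N : ℂ) * (s - s₀) ^ (N - 1) * deriv F s
      + (s - s₀) ^ N * deriv (deriv F) s with hG₂_def
  have hG₀d : ∀ s ∈ U, HasDerivAt G₀ (G₁ s) s := by
    intro s hs
    have h := (hzpow N s hs).mul (hFdiff s hs.1)
    exact h.congr_deriv (by simp only [hG₁_def])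
  have hG₁d : ∀ s ∈ U, HasDerivAt G₁ (G₂ s) s := by
    intro s hs
    have h1 := ((hzpow (N - 1) s hs).const_mul ((N : ℂ))).mul (hFdiff s hs.1)
    have h2 := (hzpow N s hs).mul (hF'diff s hs.1)
    have h := h1.add h2
    refine h.congr_deriv ?_
    simp only [hG₂_def]
    rw [show N - 1 - 1 = N - 2 by ring]
    push_cast
    ring
  have hzc : ∀ s : ℂ, (s - s₀) ^ N = ((s - s₀) ^ (k + 1))⁻¹ := by
    intro s
    rw [hN_def, show -((k : ℤ) + 1) = -(((k + 1 : ℕ) : ℤ)) by push_cast; ring,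
      zpow_neg, zpow_natCast]
  have hzc1 : ∀ s : ℂ, (s - s₀) ^ (N - 1) = ((s - s₀) ^ (k + 2))⁻¹ := by
    intro s
    rw [show N - 1 = -(((k + 2 : ℕ) : ℤ)) by rw [hN_def]; push_cast; ring,
      zpow_neg, zpow_natCast]
  have hzc2 : ∀ s : ℂ, (s - s₀) ^ (N - 2) = ((s - s₀) ^ (k + 3))⁻¹ := by
    intro s
    rw [show N - 2 = -(((k + 3 : ℕ) : ℤ)) by rw [hN_def]; push_cast; ring,
      zpow_neg, zpow_natCast]
  have hqG₀ : ∀ s ∈ U, q s = G₀ s := by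
    intro s hs
    simp only [hG₀_def]
    rw [hzc, ← hqF s hs.1 hs.2, inv_mul_cancel_left₀ (pow_ne_zero _ (htne s hs))]
  have hq'G₁ : ∀ s ∈ U, q' s = G₁ s := by
    intro s hs
    obtain ⟨h1, h2⟩ := hBsub s hs.1 hs.2
    have hd : HasDerivAt q (q' s) s := hq s h1 h2
    have heq : G₀ =ᶠ[𝓝 s] q :=
      eventually_of_mem (hUopen.mem_nhds hs) fun y hy => (hqG₀ y hy).symm
    exact (hd.congr_of_eventuallyEq heq).unique (hG₀d s hs)
  have hq''G₂ : ∀ s ∈ U, q'' s = G₂ s := by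
    intro s hs
    obtain ⟨h1, h2⟩ := hBsub s hs.1 hs.2
    have hd : HasDerivAt q' (q'' s) s := hq' s h1 h2
    have heq : G₁ =ᶠ[𝓝 s] q' :=
      eventually_of_mem (hUopen.mem_nhds hs) fun y hy => (hq'G₁ y hy).symm
    exact (hd.congr_of_eventuallyEq heq).unique (hG₁d s hs)
  -- step 3 : the polynomial identity
  set Φ : ℂ → ℂ := fun s =>
    ((k : ℂ) + 1) * ((k : ℂ) + 2) * (s - s₀) ^ (2 * k) * F s
      - 2 * ((k : ℂ) + 1) * (s - s₀) ^ (2 * k + 1) * deriv F s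
      + (s - s₀) ^ (2 * k + 2) * deriv (deriv F) s
      - s * (s - s₀) ^ (2 * k + 2) * F s
      - 2 * (F s) ^ 3
      + ν * (s - s₀) ^ (3 * k + 3) with hΦ_def
  have hΦU : ∀ s ∈ U, Φ s = 0 := by
    intro s hs
    obtain ⟨h1, h2⟩ := hBsub s hs.1 hs.2
    have ht := htne s hs
    have hPIIs := hPII s h1 h2
    rw [hq''G₂ s hs, hqG₀ s hs] at hPIIs
    have key2 : Φ s = (s - s₀) ^ (3 * k + 3) * (G₂ s - (s * G₀ s + 2 * (G₀ s) ^ 3 - ν)) := by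
      have base := PII_aux_identity k (s - s₀) (F s) (deriv F s) (deriv (deriv F) s) s ν ht
      simp only [hΦ_def, hG₂_def, hG₀_def, hzc, hzc1, hzc2]
      simp only [hN_def]
      push_cast
      linear_combination base
    rw [key2, hPIIs, sub_self, mul_zero]
  -- step 4 : continuity and the limit at s₀
  have hs₀B : s₀ ∈ B := Metric.mem_ball_self hδ2
  have hcF : ContinuousAt F s₀ := (hFanal s₀ hs₀B).continuousAt
  have hcF' : ContinuousAt (deriv F) s₀ := (hF'anal s₀ hs₀B).continuousAt
  have hcF'' : ContinuousAt (deriv (deriv F)) s₀ := (hF''anal s₀ hs₀B).continuousAt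
  have hid : ContinuousAt (fun s : ℂ => s - s₀) s₀ := continuousAt_id.sub continuousAt_const
  have hΦcont : ContinuousAt Φ s₀ := by
    simp only [hΦ_def]
    exact ((((((continuousAt_const.mul (hid.pow _)).mul hcF).sub
      ((continuousAt_const.mul (hid.pow _)).mul hcF')).add
      ((hid.pow _).mul hcF'')).sub
      ((continuousAt_id.mul (hid.pow _)).mul hcF)).sub
      (continuousAt_const.mul (hcF.pow 3))).add
      (continuousAt_const.mul (hid.pow _))
  have hΦ0 : Φ s₀ = 0 := by
    have hUmem : U ∈ 𝓝[≠] s₀ := by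
      rw [mem_nhdsWithin]
      exact ⟨B, Metric.isOpen_ball, hs₀B, fun x hx => ⟨hx.1, hx.2⟩⟩
    have hT1 : Tendsto Φ (𝓝[≠] s₀) (𝓝 (Φ s₀)) :=
      hΦcont.continuousWithinAt.tendsto
    have hT2 : Tendsto Φ (𝓝[≠] s₀) (𝓝 0) :=
      tendsto_const_nhds.congr' (eventuallyEq_of_mem hUmem fun s hs => (hΦU s hs).symm)
    exact tendsto_nhds_unique hT1 hT2
  simp only [hΦ_def, sub_self] at hΦ0
  rcases Nat.eq_zero_or_pos k with hk | hk
  · subst hk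
    norm_num at hΦ0
    refine ⟨rfl, ?_⟩
    have hb : c (-1 : ℤ) = F s₀ := by rw [hFs₀]; norm_num
    rw [hb]
    have hfac : (F s₀ - 1) * (F s₀ + 1) * F s₀ = 0 := by linear_combination (-1/2 : ℂ) * hΦ0
    rcases mul_eq_zero.mp hfac with h | h
    · rcases mul_eq_zero.mp h with h | h
      · left; linear_combination h
      · right; linear_combination h
    · exact absurd h hFs₀ne
  · exfalso
    have hz : ∀ j : ℕ, j ≠ 0 → (0 : ℂ) ^ j = 0 := fun j hj => zero_pow hj
    rw [hz (2 * k) (by omega), hz (2 * k + 1) (by omega), hz (2 * k + 2) (by omega),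
      hz (3 * k + 3) (by omega)] at hΦ0
    simp only [mul_zero, zero_mul, sub_zero, zero_sub, add_zero, zero_add, neg_eq_zero] at hΦ0
    have h3 : F s₀ = 0 := by
      have := hΦ0
      have h4 : (F s₀) ^ 3 = 0 := by linear_combination (1/2 : ℂ) * this
      exact pow_eq_zero_iff (by norm_num) |>.mp h4
    exact hFs₀ne h3
end

section
/- Let ν, s₀ be complex numbers and suppose q(s) = ε/(s - s₀) + Σ_{k ≥ 0} c_k·(s - s₀)^k, with ε ∈ {1, -1}, is given by a convergent Laurent series on a punctured disk {s : 0 < |s - s₀| < δ} and satisfies the Painlevé II equation q''(s) = s·q(s) + 2·q(s)³ - ν there. Define H(s) := (q'(s))² - s·q(s)² - q(s)⁴ + 2ν·q(s). Then (s - s₀)·H(s) → 1 as s → s₀ (H has a simple pole at s₀ with residue 1). Consequently, if ε = 1 then H - q has a removable singularity at s₀, i.e., H(s) - q(s) extends to an analytic function on the full disk {s : |s - s₀| < δ}. -/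
open Complex Filter Topology

lemma aux_series (s₀ : ℂ) (δ : ℝ) (hδ : 0 < δ) (c : ℕ → ℂ)
    (hsm : ∀ r : ℝ, 0 < r → r < δ → Summable (fun k : ℕ => c k * (r : ℂ) ^ k)) (m : ℕ) :
    ∃ f : ℂ → ℂ, AnalyticOnNhd ℂ f (Metric.ball s₀ δ) ∧
      ∀ s ∈ Metric.ball s₀ δ, HasSum (fun k : ℕ => c (k + m) * (s - s₀) ^ k) (f s) := by
  set p : FormalMultilinearSeries ℂ ℂ ℂ :=
    FormalMultilinearSeries.ofScalars ℂ (fun k => c (k + m)) with hp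
  have hrad : ENNReal.ofReal δ ≤ p.radius := by
    apply ENNReal.le_of_forall_nnreal_lt (fun r hr => ?_)
    rcases eq_or_lt_of_le (show (0:NNReal) ≤ r from zero_le) with h0 | h0
    · simp [← h0]
    · have hrδ : (r : ℝ) < δ := by
        rw [← ENNReal.ofReal_coe_nnreal] at hr
        exact (ENNReal.ofReal_lt_ofReal_iff hδ).1 hr
      have h0r : (0:ℝ) < (r:ℝ) := h0
      have hsm' := (summable_nat_add_iff m).2 (hsm r h0r hrδ)
      have htz : Tendsto (fun n : ℕ => ‖c (n + m) * ((r:ℝ) : ℂ) ^ (n + m)‖ / (r:ℝ)^m)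
          atTop (𝓝 0) := by
        simpa using (hsm'.tendsto_atTop_zero.norm).div_const ((r:ℝ)^m)
      apply p.le_radius_of_tendsto (l := 0)
      convert htz using 2 with n
      have : ‖p n‖ = ‖c (n + m)‖ := FormalMultilinearSeries.ofScalars_norm ..
      rw [this, norm_mul, norm_pow]
      simp only [Complex.norm_real, Real.norm_eq_abs, abs_of_pos h0r]
      field_simp [pow_add]
      ring
  have hball : HasFPowerSeriesOnBall (fun s => p.sum (s - s₀)) p s₀ (ENNReal.ofReal δ) := by
    refine ⟨hrad, by simp [hδ], ?_⟩
    intro y hy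
    have hy' : y ∈ EMetric.ball (0:ℂ) p.radius := EMetric.ball_subset_ball hrad hy
    simpa using p.hasSum hy'
  refine ⟨fun s => p.sum (s - s₀), ?_, ?_⟩
  · have := hball.analyticOnNhd
    rwa [Metric.emetric_ball] at this
  · intro s hs
    have hy : s - s₀ ∈ Metric.eball (0:ℂ) (ENNReal.ofReal δ) := by
      rw [Metric.emetric_ball]
      simpa [Metric.mem_ball, dist_eq_norm] using hs
    have h2 := hball.hasSum hy
    simp only [add_sub_cancel_left] at h2
    have hfun : (fun k : ℕ => c (k + m) * (s - s₀) ^ k)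
        = fun n => p n fun _ => (s - s₀) := by
      funext k
      rw [hp, FormalMultilinearSeries.ofScalars_apply_eq]
      simp [smul_eq_mul, mul_comm]
    rw [hfun]
    exact h2

/-- The Painlevé II Hamiltonian `H = (q')² - s q² - q⁴ + 2νq`. -/
noncomputable def PIIHamiltonian (ν : ℂ) (q q' : ℂ → ℂ) (s : ℂ) : ℂ :=
  (q' s) ^ 2 - s * (q s) ^ 2 - (q s) ^ 4 + 2 * ν * q s

set_option maxHeartbeats 1600000 in
set_option maxRecDepth 10000 in
/-- At a simple pole `s₀` of a Painlevé II transcendent `q` with residue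
`ε ∈ {1, -1}`, the Hamiltonian `H` has a simple pole with residue `1`
(i.e. `(s - s₀)H(s) → 1`); consequently, if `ε = 1` then `H - q` extends
analytically to the full disk around `s₀`. -/
theorem PII_hamiltonian_pole (ν s₀ ε : ℂ) (δ : ℝ) (hδ : 0 < δ)
    (hε : ε = 1 ∨ ε = -1)
    (q q' q'' : ℂ → ℂ) (c : ℕ → ℂ)
    (hsum : ∀ s : ℂ, 0 < ‖s - s₀‖ → ‖s - s₀‖ < δ →
      HasSum (fun k : ℕ => c k * (s - s₀) ^ k) (q s - ε / (s - s₀)))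
    (hq : ∀ s : ℂ, 0 < ‖s - s₀‖ → ‖s - s₀‖ < δ →
      HasDerivAt q (q' s) s)
    (hq' : ∀ s : ℂ, 0 < ‖s - s₀‖ → ‖s - s₀‖ < δ →
      HasDerivAt q' (q'' s) s)
    (hPII : ∀ s : ℂ, 0 < ‖s - s₀‖ → ‖s - s₀‖ < δ →
      q'' s = s * q s + 2 * (q s) ^ 3 - ν) :
    Tendsto (fun s : ℂ => (s - s₀) * PIIHamiltonian ν q q' s)
        (nhdsWithin s₀ {s : ℂ | 0 < ‖s - s₀‖ ∧ ‖s - s₀‖ < δ})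
        (nhds 1) ∧
      (ε = 1 → ∃ g : ℂ → ℂ, AnalyticOnNhd ℂ g (Metric.ball s₀ δ) ∧
        ∀ s : ℂ, 0 < ‖s - s₀‖ → ‖s - s₀‖ < δ →
          g s = PIIHamiltonian ν q q' s - q s) := by
  have hmem₀ : s₀ ∈ Metric.ball s₀ δ := Metric.mem_ball_self hδ
  -- summability of the coefficient series at each radius
  have hsm : ∀ r : ℝ, 0 < r → r < δ → Summable (fun k : ℕ => c k * (r : ℂ) ^ k) := by
    intro r h0 hrδ
    have h1 : ‖(s₀ + r) - s₀‖ = r := by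
      simp [abs_of_pos h0]
    have := (hsum (s₀ + r) (by rw [h1]; exact h0) (by rw [h1]; exact hrδ)).summable
    simpa [add_sub_cancel_left] using this
  obtain ⟨h, hh_an, hh_sum0⟩ := aux_series s₀ δ hδ c hsm 0
  obtain ⟨f3, hf3_an, hf3_sum⟩ := aux_series s₀ δ hδ c hsm 3
  have hh_sum : ∀ s ∈ Metric.ball s₀ δ, HasSum (fun k : ℕ => c k * (s - s₀) ^ k) (h s) := by
    intro s hs; simpa using hh_sum0 s hs
  -- the Taylor identity (I)
  have hI : ∀ s ∈ Metric.ball s₀ δ,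
      h s = c 0 + c 1 * (s - s₀) + c 2 * (s - s₀)^2 + (s - s₀)^3 * f3 s := by
    intro s hs
    have H0 := hh_sum s hs
    have H3 := (hf3_sum s hs).mul_left ((s - s₀)^3)
    have hfun : (fun k : ℕ => (s - s₀)^3 * (c (k + 3) * (s - s₀) ^ k))
        = fun k : ℕ => c (k + 3) * (s - s₀) ^ (k + 3) := by
      funext k; ring
    rw [hfun] at H3
    have H4 := (hasSum_nat_add_iff (f := fun k : ℕ => c k * (s - s₀) ^ k) 3).1 H3
    have hEq := H0.unique H4
    rw [hEq]
    simp only [Finset.sum_range_succ, Finset.sum_range_zero]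
    ring
  -- the punctured disk
  set S : Set ℂ := {s : ℂ | 0 < ‖s - s₀‖ ∧ ‖s - s₀‖ < δ} with hSdef
  have hSsub : S ⊆ Metric.ball s₀ δ := fun s hs => by
    simpa [Metric.mem_ball, Complex.dist_eq] using hs.2
  have hSeq : S = {s₀}ᶜ ∩ Metric.ball s₀ δ := by
    ext z
    simp only [hSdef, Set.mem_setOf_eq, Set.mem_inter_iff, Set.mem_compl_iff,
      Set.mem_singleton_iff, Metric.mem_ball, Complex.dist_eq]
    constructor
    · rintro ⟨h1, h2⟩
      refine ⟨fun hz => by simp [hz] at h1, h2⟩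
    · rintro ⟨h1, h2⟩
      refine ⟨?_, h2⟩
      have hz : z - s₀ ≠ 0 := sub_ne_zero.2 h1
      simpa [AbsoluteValue.pos_iff] using hz
  have hSopen : IsOpen S := by
    rw [hSeq]; exact isOpen_compl_singleton.inter Metric.isOpen_ball
  have hne : ∀ s ∈ S, s - s₀ ≠ 0 := fun s hs => by
    rw [hSeq] at hs; exact sub_ne_zero.2 hs.1
  haveI hLne : (𝓝[S] s₀).NeBot := by
    rw [hSeq, nhdsWithin_inter_of_mem'
      (mem_nhdsWithin_of_mem_nhds (Metric.ball_mem_nhds s₀ hδ))]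
    exact NormedField.nhdsNE_neBot s₀
  -- analyticity of derivatives
  have hf3d_an : AnalyticOnNhd ℂ (deriv f3) (Metric.ball s₀ δ) := hf3_an.deriv
  have hf3dd_an : AnalyticOnNhd ℂ (deriv (deriv f3)) (Metric.ball s₀ δ) := hf3d_an.deriv
  -- derivative of h
  have hhD : ∀ s ∈ Metric.ball s₀ δ, HasDerivAt h
      (c 1 + 2*c 2*(s - s₀) + 3*(s - s₀)^2*f3 s + (s - s₀)^3*deriv f3 s) s := by
    intro s hs
    have h1 : HasDerivAt (fun z : ℂ => z - s₀) 1 s := (hasDerivAt_id s).sub_const s₀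
    have hf3d : HasDerivAt f3 (deriv f3 s) s := (hf3_an s hs).differentiableAt.hasDerivAt
    have base := (((h1.const_mul (c 1)).const_add (c 0)).add
      ((h1.pow 2).const_mul (c 2))).add ((h1.pow 3).mul hf3d)
    have base' : HasDerivAt
        (fun z => c 0 + c 1 * (z - s₀) + c 2 * (z - s₀)^2 + (z - s₀)^3 * f3 z)
        (c 1 + 2*c 2*(s - s₀) + 3*(s - s₀)^2*f3 s + (s - s₀)^3*deriv f3 s) s := by
      refine HasDerivAt.congr_deriv base ?_
      norm_num
      ring
    have heq : h =ᶠ[𝓝 s]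
        (fun z => c 0 + c 1 * (z - s₀) + c 2 * (z - s₀)^2 + (z - s₀)^3 * f3 z) :=
      eventuallyEq_of_mem (Metric.isOpen_ball.mem_nhds hs) (fun z hz => hI z hz)
    exact heq.hasDerivAt_iff.2 base'
  -- derivative of the derivative expression
  have hDD : ∀ s ∈ Metric.ball s₀ δ, HasDerivAt
      (fun z => c 1 + 2*c 2*(z - s₀) + 3*(z - s₀)^2*f3 z + (z - s₀)^3*deriv f3 z)
      (2*c 2 + 6*(s - s₀)*f3 s + 6*(s - s₀)^2*deriv f3 s + (s - s₀)^3*deriv (deriv f3) s)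
      s := by
    intro s hs
    have h1 : HasDerivAt (fun z : ℂ => z - s₀) 1 s := (hasDerivAt_id s).sub_const s₀
    have hf3d : HasDerivAt f3 (deriv f3 s) s := (hf3_an s hs).differentiableAt.hasDerivAt
    have hf3dd : HasDerivAt (deriv f3) (deriv (deriv f3) s) s :=
      (hf3d_an s hs).differentiableAt.hasDerivAt
    have base := (((hasDerivAt_const s (c 1)).add (h1.const_mul (2*c 2))).add
      (((h1.pow 2).const_mul 3).mul hf3d)).add ((h1.pow 3).mul hf3dd)
    refine HasDerivAt.congr_deriv base ?_
    norm_num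
    ring
  -- q on the punctured disk
  have hqe : ∀ s ∈ S, q s = h s + ε / (s - s₀) := by
    intro s hs
    have := (hsum s hs.1 hs.2).unique (hh_sum s (hSsub hs))
    exact sub_eq_iff_eq_add.1 this
  -- q' on the punctured disk
  have hq'e : ∀ s ∈ S, q' s =
      (c 1 + 2*c 2*(s - s₀) + 3*(s - s₀)^2*f3 s + (s - s₀)^3*deriv f3 s)
        - ε / (s - s₀)^2 := by
    intro s hs
    have hsb := hSsub hs
    have hts := hne s hs
    have heq : q =ᶠ[𝓝 s] (fun z => h z + ε / (z - s₀)) :=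
      eventuallyEq_of_mem (hSopen.mem_nhds hs) (fun z hz => hqe z hz)
    have hd1 : HasDerivAt (fun z : ℂ => ε / (z - s₀))
        ((0 * (s - s₀) - ε * 1)/(s - s₀)^2) s :=
      (hasDerivAt_const s ε).div ((hasDerivAt_id s).sub_const s₀) hts
    have hd := (hhD s hsb).add hd1
    have hval := (heq.hasDerivAt_iff.1 (hq s hs.1 hs.2)).unique hd
    rw [hval]; ring
  -- q'' on the punctured disk
  have hq''e : ∀ s ∈ S, q'' s = 2*ε/(s - s₀)^3 +
      (2*c 2 + 6*(s - s₀)*f3 s + 6*(s - s₀)^2*deriv f3 s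
        + (s - s₀)^3*deriv (deriv f3) s) := by
    intro s hs
    have hsb := hSsub hs
    have hts := hne s hs
    have heq : q' =ᶠ[𝓝 s] (fun z =>
        (c 1 + 2*c 2*(z - s₀) + 3*(z - s₀)^2*f3 z + (z - s₀)^3*deriv f3 z)
          - ε / (z - s₀)^2) :=
      eventuallyEq_of_mem (hSopen.mem_nhds hs) (fun z hz => hq'e z hz)
    have hd2 : HasDerivAt (fun z : ℂ => ε / (z - s₀)^2)
        ((0 * (s - s₀)^2 - ε * (2 * (s - s₀)^1 * 1))/((s - s₀)^2)^2) s := by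
      have := (hasDerivAt_const s ε).div
        (((hasDerivAt_id s).sub_const s₀).pow 2) (pow_ne_zero 2 hts)
      refine HasDerivAt.congr_deriv this ?_
      simp
    have hd := (hDD s hsb).sub hd2
    have hval := (heq.hasDerivAt_iff.1 (hq' s hs.1 hs.2)).unique hd
    rw [hval]
    field_simp
    ring
  -- the ODE in terms of h, f3
  have hstar : ∀ s ∈ S,
      2*ε/(s - s₀)^3 + (2*c 2 + 6*(s - s₀)*f3 s + 6*(s - s₀)^2*deriv f3 s
        + (s - s₀)^3*deriv (deriv f3) s)
      = s * (h s + ε/(s - s₀)) + 2*(h s + ε/(s - s₀))^3 - ν := by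
    intro s hs
    rw [← hq''e s hs, ← hqe s hs]
    exact hPII s hs.1 hs.2
  -- uniqueness-of-limits helper
  have huniq : ∀ {f g : ℂ → ℂ} {a b : ℂ}, Set.EqOn f g S →
      Tendsto f (𝓝[S] s₀) (𝓝 a) → Tendsto g (𝓝[S] s₀) (𝓝 b) → a = b := by
    intro f g a b hfg hf hg
    exact tendsto_nhds_unique
      ((hf.congr' (eventuallyEq_of_mem self_mem_nhdsWithin hfg))) hg
  have tend : ∀ {F : ℂ → ℂ}, ContinuousAt F s₀ → Tendsto F (𝓝[S] s₀) (𝓝 (F s₀)) :=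
    fun hF => hF.tendsto.mono_left nhdsWithin_le_nhds
  -- continuity facts
  have cf3 : ContinuousAt f3 s₀ := (hf3_an s₀ hmem₀).continuousAt
  have cf3d : ContinuousAt (deriv f3) s₀ := (hf3d_an s₀ hmem₀).continuousAt
  have cf3dd : ContinuousAt (deriv (deriv f3)) s₀ := (hf3dd_an s₀ hmem₀).continuousAt
  have ch : ContinuousAt h s₀ := (hh_an s₀ hmem₀).continuousAt
  have hhs₀ : h s₀ = c 0 := by
    have := hI s₀ hmem₀; simpa using this
  -- Step A : c 0 = 0
  have hc0 : c 0 = 0 := by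
    have hA : ∀ s ∈ S, (s - s₀)^2 * (2*c 2 + 6*(s - s₀)*f3 s
          + 6*(s - s₀)^2*deriv f3 s + (s - s₀)^3*deriv (deriv f3) s)
        = ε*s*(s - s₀) + s*(s - s₀)^2*h s + 6*h s + 6*ε*(s - s₀)*(h s)^2
          + 2*(s - s₀)^2*(h s)^3 - ν*(s - s₀)^2 := by
      intro s hs
      have hts := hne s hs
      have e := hstar s hs
      have hEe : (2*c 2 + 6*(s - s₀)*f3 s + 6*(s - s₀)^2*deriv f3 s
            + (s - s₀)^3*deriv (deriv f3) s)
          = s * (h s + ε/(s - s₀)) + 2*(h s + ε/(s - s₀))^3 - ν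
            - 2*ε/(s - s₀)^3 := by linear_combination e
      rw [hEe]
      rcases hε with h1 | h1 <;> subst h1 <;> (field_simp; ring)
    have tL : Tendsto (fun s => (s - s₀)^2 * (2*c 2 + 6*(s - s₀)*f3 s
          + 6*(s - s₀)^2*deriv f3 s + (s - s₀)^3*deriv (deriv f3) s))
        (𝓝[S] s₀) (𝓝 0) := by
      have hc : ContinuousAt (fun s => (s - s₀)^2 * (2*c 2 + 6*(s - s₀)*f3 s
          + 6*(s - s₀)^2*deriv f3 s + (s - s₀)^3*deriv (deriv f3) s)) s₀ := by fun_prop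
      have := tend hc
      simpa using this
    have tR : Tendsto (fun s => ε*s*(s - s₀) + s*(s - s₀)^2*h s + 6*h s
          + 6*ε*(s - s₀)*(h s)^2 + 2*(s - s₀)^2*(h s)^3 - ν*(s - s₀)^2)
        (𝓝[S] s₀) (𝓝 (6 * c 0)) := by
      have hc : ContinuousAt (fun s => ε*s*(s - s₀) + s*(s - s₀)^2*h s + 6*h s
          + 6*ε*(s - s₀)*(h s)^2 + 2*(s - s₀)^2*(h s)^3 - ν*(s - s₀)^2) s₀ := by fun_prop
      have := tend hc
      simpa [hhs₀] using this
    have h6 : (0:ℂ) = 6 * c 0 := huniq (fun s hs => hA s hs) tL tR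
    linear_combination -h6/6
  have hh0 : ∀ s ∈ Metric.ball s₀ δ,
      h s = c 1 * (s - s₀) + c 2 * (s - s₀)^2 + (s - s₀)^3 * f3 s := by
    intro s hs
    have := hI s hs
    rw [hc0] at this
    simpa using this
  have hhs₀' : h s₀ = 0 := by rw [hhs₀, hc0]
  -- Step B : value of c 1
  have hc1 : ε*s₀ + 6*c 1 = 0 := by
    have hB : ∀ s ∈ S, (s - s₀) * (2*c 2 + 6*(s - s₀)*f3 s
          + 6*(s - s₀)^2*deriv f3 s + (s - s₀)^3*deriv (deriv f3) s)
        = ε*s + s*(s - s₀)*h s + 6*(c 1 + c 2*(s - s₀) + (s - s₀)^2*f3 s)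
          + 6*ε*(h s)^2 + 2*(s - s₀)*(h s)^3 - ν*(s - s₀) := by
      intro s hs
      have hts := hne s hs
      have e := hstar s hs
      have hEe : (2*c 2 + 6*(s - s₀)*f3 s + 6*(s - s₀)^2*deriv f3 s
            + (s - s₀)^3*deriv (deriv f3) s)
          = s * (h s + ε/(s - s₀)) + 2*(h s + ε/(s - s₀))^3 - ν
            - 2*ε/(s - s₀)^3 := by linear_combination e
      rw [hEe, hh0 s (hSsub hs)]
      rcases hε with h1 | h1 <;> subst h1 <;> (field_simp; ring)
    have tL : Tendsto (fun s => (s - s₀) * (2*c 2 + 6*(s - s₀)*f3 s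
          + 6*(s - s₀)^2*deriv f3 s + (s - s₀)^3*deriv (deriv f3) s))
        (𝓝[S] s₀) (𝓝 0) := by
      have hc : ContinuousAt (fun s => (s - s₀) * (2*c 2 + 6*(s - s₀)*f3 s
          + 6*(s - s₀)^2*deriv f3 s + (s - s₀)^3*deriv (deriv f3) s)) s₀ := by fun_prop
      have := tend hc
      simpa using this
    have tR : Tendsto (fun s => ε*s + s*(s - s₀)*h s
          + 6*(c 1 + c 2*(s - s₀) + (s - s₀)^2*f3 s)
          + 6*ε*(h s)^2 + 2*(s - s₀)*(h s)^3 - ν*(s - s₀))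
        (𝓝[S] s₀) (𝓝 (ε*s₀ + 6*c 1)) := by
      have hc : ContinuousAt (fun s => ε*s + s*(s - s₀)*h s
          + 6*(c 1 + c 2*(s - s₀) + (s - s₀)^2*f3 s)
          + 6*ε*(h s)^2 + 2*(s - s₀)*(h s)^3 - ν*(s - s₀)) s₀ := by fun_prop
      have := tend hc
      simpa [hhs₀'] using this
    have := huniq (fun s hs => hB s hs) tL tR
    linear_combination -this
  -- Step C : value of c 2
  have hc2 : c 2 = (ν - ε)/4 := by
    have hC : ∀ s ∈ S, (2*c 2 + 6*(s - s₀)*f3 s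
          + 6*(s - s₀)^2*deriv f3 s + (s - s₀)^3*deriv (deriv f3) s)
        = (ε*s₀ + 6*c 1)/(s - s₀) + ε + s*h s + 6*c 2 + 6*(s - s₀)*f3 s
          + 6*ε*h s*(c 1 + c 2*(s - s₀) + (s - s₀)^2*f3 s) + 2*(h s)^3 - ν := by
      intro s hs
      have hts := hne s hs
      have e := hstar s hs
      have hEe : (2*c 2 + 6*(s - s₀)*f3 s + 6*(s - s₀)^2*deriv f3 s
            + (s - s₀)^3*deriv (deriv f3) s)
          = s * (h s + ε/(s - s₀)) + 2*(h s + ε/(s - s₀))^3 - ν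
            - 2*ε/(s - s₀)^3 := by linear_combination e
      rw [hEe, hh0 s (hSsub hs)]
      rcases hε with h1 | h1 <;> subst h1 <;> (field_simp; ring)
    have hC' : ∀ s ∈ S, (2*c 2 + 6*(s - s₀)*f3 s
          + 6*(s - s₀)^2*deriv f3 s + (s - s₀)^3*deriv (deriv f3) s)
        = ε + s*h s + 6*c 2 + 6*(s - s₀)*f3 s
          + 6*ε*h s*(c 1 + c 2*(s - s₀) + (s - s₀)^2*f3 s) + 2*(h s)^3 - ν := by
      intro s hs
      have := hC s hs
      rw [hc1, zero_div, zero_add] at this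
      exact this
    have tL : Tendsto (fun s => (2*c 2 + 6*(s - s₀)*f3 s
          + 6*(s - s₀)^2*deriv f3 s + (s - s₀)^3*deriv (deriv f3) s))
        (𝓝[S] s₀) (𝓝 (2*c 2)) := by
      have hc : ContinuousAt (fun s => (2*c 2 + 6*(s - s₀)*f3 s
          + 6*(s - s₀)^2*deriv f3 s + (s - s₀)^3*deriv (deriv f3) s)) s₀ := by fun_prop
      have := tend hc
      simpa using this
    have tR : Tendsto (fun s => ε + s*h s + 6*c 2 + 6*(s - s₀)*f3 s
          + 6*ε*h s*(c 1 + c 2*(s - s₀) + (s - s₀)^2*f3 s) + 2*(h s)^3 - ν)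
        (𝓝[S] s₀) (𝓝 (ε + 6*c 2 - ν)) := by
      have hc : ContinuousAt (fun s => ε + s*h s + 6*c 2 + 6*(s - s₀)*f3 s
          + 6*ε*h s*(c 1 + c 2*(s - s₀) + (s - s₀)^2*f3 s) + 2*(h s)^3 - ν) s₀ := by
        fun_prop
      have := tend hc
      simpa [hhs₀'] using this
    have := huniq (fun s hs => hC' s hs) tL tR
    linear_combination -this/4
  have hc1' : c 1 = -(ε*s₀)/6 := by linear_combination hc1/6
  -- the analytic part G of the Hamiltonian
  set G : ℂ → ℂ := fun z =>
    (c 1 + 2*c 2*(z - s₀) + 3*(z - s₀)^2*f3 z + (z - s₀)^3*deriv f3 z)^2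
    - z*(h z)^2 - (h z)^4 + 2*ν*h z
    - 10*ε*f3 z - 2*ε*(z - s₀)*deriv f3 z
    - 2*ε*z*(c 1 + c 2*(z - s₀) + (z - s₀)^2*f3 z)
    - 6*(c 1 + c 2*(z - s₀) + (z - s₀)^2*f3 z)^2
    - 4*ε*(z - s₀)^2*(c 1 + c 2*(z - s₀) + (z - s₀)^2*f3 z)^3 with hGdef
  have hHG : ∀ s ∈ S, PIIHamiltonian ν q q' s = 1/(s - s₀) + G s := by
    intro s hs
    have hts := hne s hs
    have hw : (s - s₀) * (s - s₀)⁻¹ = 1 := mul_inv_cancel₀ hts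
    simp only [hGdef, PIIHamiltonian]
    rw [hqe s hs, hq'e s hs, hh0 s (hSsub hs), hc1', hc2]
    rcases hε with h1 | h1 <;> subst h1
    · simp only [div_eq_mul_inv, ← inv_pow, one_mul]
      linear_combination ((1)*(s - s₀)⁻¹ + (-10)*(f3 s) + (-2)*ν*(s - s₀)⁻¹ + (2/3)*s₀*(s - s₀)⁻¹^2 + (1/6)*s₀^2 + (1)*(s - s₀)*(s - s₀)⁻¹^2 + (-2)*(s - s₀)*(deriv f3 s) + (-10)*(s - s₀)*(f3 s)*(s - s₀)⁻¹ + (-1)*(s - s₀)*ν*(s - s₀)⁻¹^2 + (1/3)*(s - s₀)*s₀ + (-1/6)*(s - s₀)*s₀^2*(s - s₀)⁻¹ + (1/8)*(s - s₀)^2 + (-2)*(s - s₀)^2*(deriv f3 s)*(s - s₀)⁻¹ + (-4)*(s - s₀)^2*(f3 s)*(s - s₀)⁻¹^2 + (1/4)*(s - s₀)^2*ν + (-3/8)*(s - s₀)^2*ν^2 + (-1/2)*(s - s₀)^2*s₀*(s - s₀)⁻¹ + (1/2)*(s - s₀)^2*s₀*ν*(s - s₀)⁻¹ + (1/54)*(s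 - s₀)^2*s₀^3 + (-3/8)*(s - s₀)^3*(s - s₀)⁻¹ + (1)*(s - s₀)^3*(f3 s) + (3/4)*(s - s₀)^3*ν*(s - s₀)⁻¹ + (-3)*(s - s₀)^3*ν*(f3 s) + (-3/8)*(s - s₀)^3*ν^2*(s - s₀)⁻¹ + (2)*(s - s₀)^3*s₀*(f3 s)*(s - s₀)⁻¹ + (1/12)*(s - s₀)^3*s₀^2 + (-1/12)*(s - s₀)^3*s₀^2*ν + (3)*(s - s₀)^4*(f3 s)*(s - s₀)⁻¹ + (-6)*(s - s₀)^4*(f3 s)^2 + (-3)*(s - s₀)^4*ν*(f3 s)*(s - s₀)⁻¹ + (1/8)*(s - s₀)^4*s₀ + (-1/4)*(s - s₀)^4*s₀*ν + (1/8)*(s - s₀)^4*s₀*ν^2 + (-1/3)*(s - s₀)^4*s₀^2*(f3 s) + (1/16)*(s - s₀)^5 + (-6)*(s - s₀)^5*(f3 s)^2*(s - s₀)⁻¹ + (-3/16)*(s - s₀)^5*ν + (3/16)*(s - s₀)^5*ν^2 + (-1/16)*(s - s₀)^5*ν^3 + (-1)*(s - s₀)^5*s₀*(f3 s) + (1)*(s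 - s₀)^5*s₀*ν*(f3 s) + (-3/4)*(s - s₀)^6*(f3 s) + (3/2)*(s - s₀)^6*ν*(f3 s) + (-3/4)*(s - s₀)^6*ν^2*(f3 s) + (2)*(s - s₀)^6*s₀*(f3 s)^2 + (3)*(s - s₀)^7*(f3 s)^2 + (-3)*(s - s₀)^7*ν*(f3 s)^2 + (-4)*(s - s₀)^8*(f3 s)^3) * hw
    · simp only [div_eq_mul_inv, ← inv_pow, one_mul]
      linear_combination ((1)*(s - s₀)⁻¹ + (10)*(f3 s) + (2)*ν*(s - s₀)⁻¹ + (2/3)*s₀*(s - s₀)⁻¹^2 + (1/6)*s₀^2 + (1)*(s - s₀)*(s - s₀)⁻¹^2 + (2)*(s - s₀)*(deriv f3 s) + (10)*(s - s₀)*(f3 s)*(s - s₀)⁻¹ + (1)*(s - s₀)*ν*(s - s₀)⁻¹^2 + (1/3)*(s - s₀)*s₀ + (-1/6)*(s - s₀)*s₀^2*(s - s₀)⁻¹ + (1/8)*(s - s₀)^2 + (2)*(s - s₀)^2*(deriv f3 s)*(s - s₀)⁻¹ + (4)*(s - s₀)^2*(f3 s)*(s - s₀)⁻¹^2 + (-1/4)*(s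 - s₀)^2*ν + (-3/8)*(s - s₀)^2*ν^2 + (-1/2)*(s - s₀)^2*s₀*(s - s₀)⁻¹ + (-1/2)*(s - s₀)^2*s₀*ν*(s - s₀)⁻¹ + (1/54)*(s - s₀)^2*s₀^3 + (-3/8)*(s - s₀)^3*(s - s₀)⁻¹ + (-1)*(s - s₀)^3*(f3 s) + (-3/4)*(s - s₀)^3*ν*(s - s₀)⁻¹ + (-3)*(s - s₀)^3*ν*(f3 s) + (-3/8)*(s - s₀)^3*ν^2*(s - s₀)⁻¹ + (-2)*(s - s₀)^3*s₀*(f3 s)*(s - s₀)⁻¹ + (1/12)*(s - s₀)^3*s₀^2 + (1/12)*(s - s₀)^3*s₀^2*ν + (-3)*(s - s₀)^4*(f3 s)*(s - s₀)⁻¹ + (-6)*(s - s₀)^4*(f3 s)^2 + (-3)*(s - s₀)^4*ν*(f3 s)*(s - s₀)⁻¹ + (1/8)*(s - s₀)^4*s₀ + (1/4)*(s - s₀)^4*s₀*ν + (1/8)*(s - s₀)^4*s₀*ν^2 + (1/3)*(s - s₀)^4*s₀^2*(f3 s) + (1/16)*(s - s₀)^5 + (-6)*(s - s₀)^5*(f3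 s)^2*(s - s₀)⁻¹ + (3/16)*(s - s₀)^5*ν + (3/16)*(s - s₀)^5*ν^2 + (1/16)*(s - s₀)^5*ν^3 + (1)*(s - s₀)^5*s₀*(f3 s) + (1)*(s - s₀)^5*s₀*ν*(f3 s) + (3/4)*(s - s₀)^6*(f3 s) + (3/2)*(s - s₀)^6*ν*(f3 s) + (3/4)*(s - s₀)^6*ν^2*(f3 s) + (2)*(s - s₀)^6*s₀*(f3 s)^2 + (3)*(s - s₀)^7*(f3 s)^2 + (3)*(s - s₀)^7*ν*(f3 s)^2 + (4)*(s - s₀)^8*(f3 s)^3) * hw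
  -- analyticity of G on the ball
  have hG_an : AnalyticOnNhd ℂ G (Metric.ball s₀ δ) := by
    intro z hz
    have A1 : AnalyticAt ℂ f3 z := hf3_an z hz
    have A2 : AnalyticAt ℂ (deriv f3) z := hf3d_an z hz
    have A3 : AnalyticAt ℂ h z := hh_an z hz
    have Aid : AnalyticAt ℂ (fun w : ℂ => w) z := analyticAt_id
    have At : AnalyticAt ℂ (fun w : ℂ => w - s₀) z := Aid.sub analyticAt_const
    have Aphi : AnalyticAt ℂ (fun w : ℂ => c 1 + c 2*(w - s₀) + (w - s₀)^2*f3 w) z :=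
      (analyticAt_const.add (analyticAt_const.mul At)).add ((At.pow 2).mul A1)
    have AD : AnalyticAt ℂ (fun w : ℂ =>
        c 1 + 2*c 2*(w - s₀) + 3*(w - s₀)^2*f3 w + (w - s₀)^3*deriv f3 w) z :=
      ((analyticAt_const.add (analyticAt_const.mul At)).add
        ((analyticAt_const.mul (At.pow 2)).mul A1)).add ((At.pow 3).mul A2)
    rw [hGdef]
    exact (((((((AD.pow 2).sub (Aid.mul (A3.pow 2))).sub (A3.pow 4)).add
      (analyticAt_const.mul A3)).sub (analyticAt_const.mul A1)).sub
      ((analyticAt_const.mul At).mul A2)).sub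
      ((analyticAt_const.mul Aid).mul Aphi)).sub
      (analyticAt_const.mul (Aphi.pow 2)) |>.sub
      ((analyticAt_const.mul (At.pow 2)).mul (Aphi.pow 3))
  constructor
  · -- the limit statement
    have hGc : ContinuousAt G s₀ := (hG_an s₀ hmem₀).continuousAt
    have tmain : Tendsto (fun s => 1 + (s - s₀) * G s) (𝓝[S] s₀) (𝓝 1) := by
      have hc : ContinuousAt (fun s => 1 + (s - s₀) * G s) s₀ := by fun_prop
      have := tend hc
      simpa using this
    refine tmain.congr' (eventuallyEq_of_mem self_mem_nhdsWithin (fun s hs => ?_))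
    have hts := hne s hs
    rw [hHG s hs]
    field_simp
  · -- the removable singularity statement
    intro hε1
    refine ⟨fun z => G z - h z, ?_, ?_⟩
    · exact fun z hz => (hG_an z hz).sub (hh_an z hz)
    · intro s h1 h2
      have hs : s ∈ S := ⟨h1, h2⟩
      have hts := hne s hs
      rw [hHG s hs, hqe s hs, hε1]
      ring
end

section
/- Let ν be a complex number, α := ν - 1/2, and let q be analytic on an open set D ⊆ ℂ satisfying the Painlevé II equation q''(s) = s·q(s) + 2·q(s)³ - ν on D. For x with s = -2^{1/3}·x ∈ D, define u(x) := 2^{-1/3}·(q'(s) + q(s)² + s/2). Then α - u'(x) = 2^{4/3}·u(x)·q(s), where u' denotes the derivative with respect to x. -/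
open Complex

/-- The identity `α - u'(x) = 2^{4/3} u(x) q(s)` relating the Painlevé XXXIV
function `u(x) = 2^{-1/3}(q'(s) + q(s)² + s/2)`, `s = -2^{1/3} x`, to the
Painlevé II transcendent `q` with parameter `ν = α + 1/2`. -/
theorem PXXXIV_derivative_identity (ν α : ℂ) (hα : α = ν - 1/2)
    (D : Set ℂ) (hD : IsOpen D) (q q' q'' : ℂ → ℂ)
    (hq : ∀ s ∈ D, HasDerivAt q (q' s) s)
    (hq' : ∀ s ∈ D, HasDerivAt q' (q'' s) s)
    (hPII : ∀ s ∈ D, q'' s = s * q s + 2 * (q s) ^ 3 - ν)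
    (u : ℂ → ℂ)
    (hu : ∀ x : ℂ, u x = (2 : ℂ) ^ (-(1 : ℂ)/3) *
      (q' (-((2 : ℂ) ^ ((1 : ℂ)/3) * x)) + (q (-((2 : ℂ) ^ ((1 : ℂ)/3) * x))) ^ 2 +
        (-((2 : ℂ) ^ ((1 : ℂ)/3) * x)) / 2)) :
    ∀ x : ℂ, -((2 : ℂ) ^ ((1 : ℂ)/3) * x) ∈ D →
      α - deriv u x = (2 : ℂ) ^ ((4 : ℂ)/3) * u x * q (-((2 : ℂ) ^ ((1 : ℂ)/3) * x)) := by
  intro x hs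
  set a : ℂ := (2 : ℂ) ^ ((1 : ℂ)/3) with ha
  set c : ℂ := (2 : ℂ) ^ (-(1 : ℂ)/3) with hc
  set s : ℂ := -(a * x) with hsdef
  have hca : c * a = 1 := by
    rw [hc, ha, ← Complex.cpow_add _ _ two_ne_zero]
    norm_num
  have h43 : (2 : ℂ) ^ ((4 : ℂ)/3) * c = 2 := by
    rw [hc, ← Complex.cpow_add _ _ two_ne_zero]
    norm_num
  have hinner : HasDerivAt (fun y : ℂ => -(a * y)) (-a) x := by
    have h := ((hasDerivAt_id x).const_mul a).neg
    simp only [mul_one] at h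
    exact h
  have hq's : HasDerivAt (fun y : ℂ => q' (-(a * y))) (q'' s * (-a)) x :=
    (hq' s hs).comp x hinner
  have hqs : HasDerivAt (fun y : ℂ => q (-(a * y))) (q' s * (-a)) x :=
    (hq s hs).comp x hinner
  have hqsq := hqs.pow 2
  have hlin : HasDerivAt (fun y : ℂ => (-(a * y)) / 2) (-a / 2) x := hinner.div_const 2
  have hU : HasDerivAt u
      (c * (q'' s * (-a) + ((2 : ℕ) : ℂ) * q s ^ (2 - 1) * (q' s * (-a)) + -a / 2)) x := by
    have hsum := ((hq's.add hqsq).add hlin).const_mul c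
    have hfun : u = fun y : ℂ => c * (q' (-(a * y)) + (q (-(a * y))) ^ 2 + (-(a * y)) / 2) := by
      funext y; exact hu y
    rw [hfun]
    exact hsum
  rw [hU.deriv, hu x, hPII s hs, hα]
  push_cast
  linear_combination (s * q s + 2 * q s ^ 3 - ν + 2 * q s * q' s + 1/2) * hca -
    (q' s + q s ^ 2 + s / 2) * q s * h43
end

section
/- Let ν be a complex number, D ⊆ ℂ an open set, and q analytic on D satisfying the Painlevé II equation q''(s) = s·q(s) + 2·q(s)³ - ν on D. Define H(s) := (q'(s))² - s·q(s)² - q(s)⁴ + 2ν·q(s), and set A₁ := -H/2, B₁ := -q/2, A₂ := (H² - q²)/8, B₂ := -(q' + q·H)/4, A₃(s) := (2·q'(s)·q(s) + (3·q(s)² - 2s)·H(s) - H(s)³ + 2ν²)/48, B₃ := -(2q'' - 3q³ + 2q'·H + q·H²)/16. Then Aₙ'(s) = (-1)ⁿ·q(s)·Bₙ(s) on D for each n ∈ {1, 2, 3}. -/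
open Complex

lemma hamiltonian_deriv (ν : ℂ) (q q' q'' : ℂ → ℂ) (s : ℂ)
    (hq : HasDerivAt q (q' s) s) (hq' : HasDerivAt q' (q'' s) s)
    (hPII : q'' s = s * q s + 2 * (q s) ^ 3 - ν) :
    HasDerivAt (PIIHamiltonian ν q q') (-(q s) ^ 2) s := by
  have h := (((hq'.pow 2).sub ((hasDerivAt_id s).mul (hq.pow 2))).sub (hq.pow 4)).add
    ((hasDerivAt_const s (2 * ν)).mul hq)
  refine h.congr_deriv ?_
  rw [hPII]; norm_num; ring

/-- The coefficients `Aₙ, Bₙ` (A.15)–(A.16) of the asymptotic expansion of the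
Flaschka–Newell solution satisfy `Aₙ' = (-1)ⁿ q Bₙ` for `n ∈ {1, 2, 3}`. -/
theorem expansion_coefficients_derivative (ν : ℂ) (D : Set ℂ) (hD : IsOpen D)
    (q q' q'' : ℂ → ℂ)
    (hq : ∀ s ∈ D, HasDerivAt q (q' s) s)
    (hq' : ∀ s ∈ D, HasDerivAt q' (q'' s) s)
    (hPII : ∀ s ∈ D, q'' s = s * q s + 2 * (q s) ^ 3 - ν) :
    (∀ s ∈ D, HasDerivAt (fun t => -(PIIHamiltonian ν q q' t) / 2)
      ((-1 : ℂ) ^ 1 * q s * (-(q s) / 2)) s) ∧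
    (∀ s ∈ D, HasDerivAt
      (fun t => ((PIIHamiltonian ν q q' t) ^ 2 - (q t) ^ 2) / 8)
      ((-1 : ℂ) ^ 2 * q s * (-(q' s + q s * PIIHamiltonian ν q q' s) / 4)) s) ∧
    (∀ s ∈ D, HasDerivAt
      (fun t => (2 * q' t * q t + (3 * (q t) ^ 2 - 2 * t) * PIIHamiltonian ν q q' t -
        (PIIHamiltonian ν q q' t) ^ 3 + 2 * ν ^ 2) / 48)
      ((-1 : ℂ) ^ 3 * q s *
        (-(2 * q'' s - 3 * (q s) ^ 3 + 2 * q' s * PIIHamiltonian ν q q' s +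
          q s * (PIIHamiltonian ν q q' s) ^ 2) / 16)) s) := by
  refine ⟨fun s hs => ?_, fun s hs => ?_, fun s hs => ?_⟩
  · have hH := hamiltonian_deriv ν q q' q'' s (hq s hs) (hq' s hs) (hPII s hs)
    have h := (hH.neg).div_const 2
    refine h.congr_deriv ?_; ring
  · have hH := hamiltonian_deriv ν q q' q'' s (hq s hs) (hq' s hs) (hPII s hs)
    have h := ((hH.pow 2).sub ((hq s hs).pow 2)).div_const 8
    refine h.congr_deriv ?_; norm_num; ring
  · have hH := hamiltonian_deriv ν q q' q'' s (hq s hs) (hq' s hs) (hPII s hs)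
    have h1 := ((hasDerivAt_const s 2).mul (hq' s hs)).mul (hq s hs)
    have h2 := ((((hq s hs).pow 2).const_mul 3).sub ((hasDerivAt_id s).const_mul 2)).mul hH
    have h := ((((h1.add h2).sub (hH.pow 3)).add_const (2 * ν ^ 2)).div_const 48)
    refine h.congr_deriv ?_
    norm_num [PIIHamiltonian, hPII s hs]
    ring
end

section
/- Let η := exp(2πi/3), let n be a positive integer, let Q be a polynomial with complex coefficients, and let ρ̂ : ℝ → ℂ be continuous on [-1, 0]. Suppose ∫_{-1}^{0} x^m·Q(x)·ρ̂(x) dx = 0 for every m ∈ {0, 1, ..., n-1}. Then for every integer k with 0 ≤ k ≤ 3n + 1, Σ_{j=0}^{2} η^{j(k+1)} · ∫_{-1}^{0} t^k·Q(t³)·ρ̂(t³) dt = 0. -/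
open Complex

/-- If `Q` is orthogonal to `x^m`, `m < n`, on `[-1, 0]` with weight `ρ̂`, then
for every `k ≤ 3n + 1`,
`Σ_{j=0}^{2} η^{j(k+1)} ∫_{-1}^{0} t^k Q(t³) ρ̂(t³) dt = 0`, where
`η = exp(2πi/3)`. -/
theorem trefoil_orthogonality (n : ℕ) (hn : 0 < n) (Q : Polynomial ℂ) (ρ : ℝ → ℂ)
    (hρ : ContinuousOn ρ (Set.Icc (-1 : ℝ) 0))
    (horth : ∀ m : ℕ, m < n →
      ∫ x in (-1 : ℝ)..0, (x : ℂ) ^ m * Q.eval (x : ℂ) * ρ x = 0) :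
    ∀ k : ℕ, k ≤ 3 * n + 1 →
      ∑ j ∈ Finset.range 3,
        Complex.exp (2 * Real.pi * Complex.I / 3) ^ (j * (k + 1)) *
          ∫ t in (-1 : ℝ)..0, (t : ℂ) ^ k * Q.eval ((t : ℂ) ^ 3) * ρ (t ^ 3) = 0 := by
  intro k hk
  have hprim : IsPrimitiveRoot (Complex.exp (2 * Real.pi * Complex.I / 3)) 3 := by
    have := Complex.isPrimitiveRoot_exp 3 (by norm_num)
    simpa using this
  by_cases h3 : (3 : ℕ) ∣ k + 1
  · -- integral vanishes
    obtain ⟨m', hm'⟩ := h3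
    have hm'pos : 0 < m' := by omega
    obtain ⟨m, rfl⟩ : ∃ m, m' = m + 1 := ⟨m' - 1, by omega⟩
    have hkm : k = 3 * m + 2 := by omega
    have hmn : m < n := by omega
    set g : ℝ → ℂ := fun x => (x : ℂ) ^ m * Q.eval (x : ℂ) * ρ x with hg
    have hgcont : ContinuousOn g (Set.Icc (-1 : ℝ) 0) := by
      apply ContinuousOn.mul
      · apply ContinuousOn.mul
        · fun_prop
        · exact (Q.continuous_aeval.comp Complex.continuous_ofReal).continuousOn
      · exact hρ
    have hsub : (∫ t in (-1 : ℝ)..0, (3 * t ^ 2 : ℝ) • g (t ^ 3))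
        = ∫ x in (-1 : ℝ)..0, g x := by
      have h := intervalIntegral.integral_comp_smul_deriv'
        (a := (-1 : ℝ)) (b := 0) (f := fun t => t ^ 3) (f' := fun t => 3 * t ^ 2)
        (g := g)
        (fun x _ => by simpa using (hasDerivAt_pow 3 x))
        (by fun_prop)
        (hgcont.mono (by
          rintro _ ⟨t, ht, rfl⟩
          rw [Set.uIcc_of_le (by norm_num : (-1:ℝ) ≤ 0)] at ht
          have h1 : (-1 : ℝ) ≤ t ^ 3 := by
            nlinarith [ht.1, ht.2, sq_nonneg t, sq_nonneg (t + 1), sq_nonneg (t - 1)]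
          have h2 : t ^ 3 ≤ 0 := by
            nlinarith [ht.1, ht.2, sq_nonneg t, sq_nonneg (t + 1), sq_nonneg (t - 1)]
          exact ⟨h1, h2⟩))
      norm_num [Function.comp_def] at h
      simpa using h
    have hint : (∫ t in (-1 : ℝ)..0, (t : ℂ) ^ k * Q.eval ((t : ℂ) ^ 3) * ρ (t ^ 3)) = 0 := by
      have heq : ∀ t : ℝ, (t : ℂ) ^ k * Q.eval ((t : ℂ) ^ 3) * ρ (t ^ 3)
          = (1 / 3 : ℂ) * ((3 * t ^ 2 : ℝ) • g (t ^ 3)) := by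
        intro t
        rw [hkm]
        simp only [hg, Complex.real_smul]
        push_cast
        ring
      simp_rw [heq]
      rw [intervalIntegral.integral_const_mul, hsub, horth m hmn, mul_zero]
    simp [hint]
  · -- geometric sum vanishes
    set ζ := Complex.exp (2 * Real.pi * Complex.I / 3) ^ (k + 1) with hζ
    have hζ3 : ζ ^ 3 = 1 := by
      rw [hζ, ← pow_mul, Nat.mul_comm (k + 1) 3, pow_mul, hprim.pow_eq_one, one_pow]
    have hζ1 : ζ ≠ 1 := by
      rw [hζ]
      intro h
      exact h3 ((hprim.pow_eq_one_iff_dvd (k + 1)).mp h)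
    have hgeom : ∑ j ∈ Finset.range 3, ζ ^ j = 0 := by
      rw [geom_sum_eq hζ1, hζ3, sub_self, zero_div]
    calc ∑ j ∈ Finset.range 3,
          Complex.exp (2 * Real.pi * Complex.I / 3) ^ (j * (k + 1)) *
            ∫ t in (-1 : ℝ)..0, (t : ℂ) ^ k * Q.eval ((t : ℂ) ^ 3) * ρ (t ^ 3)
        = (∑ j ∈ Finset.range 3, ζ ^ j) *
            ∫ t in (-1 : ℝ)..0, (t : ℂ) ^ k * Q.eval ((t : ℂ) ^ 3) * ρ (t ^ 3) := by
          rw [Finset.sum_mul]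
          refine Finset.sum_congr rfl fun j _ => ?_
          congr 1
          rw [hζ, ← pow_mul, Nat.mul_comm]
      _ = 0 := by rw [hgeom, zero_mul]
end

section
/- Let α₀, α₁, α₂, α₃ be real numbers such that α₀ + α₁ + α₂ + α₃ is an integer and none of α₁, α₂, α₃ is an integer. Define v₁ := 1 - e^{2πi·α₁}, v₂ := e^{2πi·α₁}·(1 - e^{2πi·α₂}), v₃ := e^{-2πi·α₃} - 1. Then v₁, v₂, v₃ are nonzero and: (i) -(e^{iπα₀}·v₂ + e^{-iπα₀}·v₃)/v₁ = sin((α₀ + α₁)π)/sin(α₁π); (ii) -(v₁ + v₃)/(e^{iπα₀}·v₂) = sin((α₀ + α₂)π)/sin(α₂π); (iii) -(v₂ + v₁)/(e^{-iπα₀}·v₃) = sin((α₀ + α₃)π)/sin(α₃π). -/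
open Complex

/-- The Stokes parameters of the algebraic function `∏(z - a_k)^{α_k}`:
with `v₁ = 1 - e^{2πiα₁}`, `v₂ = e^{2πiα₁}(1 - e^{2πiα₂})`, `v₃ = e^{-2πiα₃} - 1`,
the formulas (3.1) evaluate to `sin((α₀ + αᵢ)π)/sin(αᵢπ)`. -/
theorem algebraic_weight_stokes (α₀ α₁ α₂ α₃ : ℝ)
    (hsum : ∃ m : ℤ, α₀ + α₁ + α₂ + α₃ = (m : ℝ))
    (h₁ : ∀ m : ℤ, α₁ ≠ (m : ℝ)) (h₂ : ∀ m : ℤ, α₂ ≠ (m : ℝ))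
    (h₃ : ∀ m : ℤ, α₃ ≠ (m : ℝ))
    (v₁ v₂ v₃ : ℂ)
    (hv₁ : v₁ = 1 - Complex.exp (2 * Real.pi * Complex.I * (α₁ : ℂ)))
    (hv₂ : v₂ = Complex.exp (2 * Real.pi * Complex.I * (α₁ : ℂ)) *
      (1 - Complex.exp (2 * Real.pi * Complex.I * (α₂ : ℂ))))
    (hv₃ : v₃ = Complex.exp (-(2 * Real.pi * Complex.I * (α₃ : ℂ))) - 1) :
    v₁ ≠ 0 ∧ v₂ ≠ 0 ∧ v₃ ≠ 0 ∧
      -(Complex.exp (Complex.I * Real.pi * (α₀ : ℂ)) * v₂ +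
          Complex.exp (-(Complex.I * Real.pi * (α₀ : ℂ))) * v₃) / v₁ =
        ((Real.sin ((α₀ + α₁) * Real.pi) / Real.sin (α₁ * Real.pi) : ℝ) : ℂ) ∧
      -(v₁ + v₃) / (Complex.exp (Complex.I * Real.pi * (α₀ : ℂ)) * v₂) =
        ((Real.sin ((α₀ + α₂) * Real.pi) / Real.sin (α₂ * Real.pi) : ℝ) : ℂ) ∧
      -(v₂ + v₁) / (Complex.exp (-(Complex.I * Real.pi * (α₀ : ℂ))) * v₃) =
        ((Real.sin ((α₀ + α₃) * Real.pi) / Real.sin (α₃ * Real.pi) : ℝ) : ℂ) := by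
  obtain ⟨m, hm⟩ := hsum
  have h2 : ∀ x : ℝ, Complex.exp (2 * Real.pi * Complex.I * (x : ℂ)) =
      Complex.exp (Real.pi * Complex.I * x) * Complex.exp (Real.pi * Complex.I * x) := by
    intro x; rw [← Complex.exp_add]; ring_nf
  have hE0 : Complex.exp (Complex.I * Real.pi * (α₀ : ℂ)) =
      Complex.exp (Real.pi * Complex.I * α₀) := by ring_nf
  have hE0' : Complex.exp (-(Complex.I * Real.pi * (α₀ : ℂ))) =
      (Complex.exp (Real.pi * Complex.I * α₀))⁻¹ := by
    rw [← Complex.exp_neg]; ring_nf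
  have hE3' : Complex.exp (-(2 * Real.pi * Complex.I * (α₃ : ℂ))) =
      (Complex.exp (Real.pi * Complex.I * α₃) * Complex.exp (Real.pi * Complex.I * α₃))⁻¹ := by
    rw [Complex.exp_neg, h2]
  have hC : (α₀ : ℂ) + α₁ + α₂ + α₃ = (m : ℂ) := by exact_mod_cast hm
  have hP : (Complex.exp (Real.pi * Complex.I * α₀) * Complex.exp (Real.pi * Complex.I * α₁) *
        Complex.exp (Real.pi * Complex.I * α₂) * Complex.exp (Real.pi * Complex.I * α₃)) *
      (Complex.exp (Real.pi * Complex.I * α₀) * Complex.exp (Real.pi * Complex.I * α₁) *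
        Complex.exp (Real.pi * Complex.I * α₂) * Complex.exp (Real.pi * Complex.I * α₃)) = 1 := by
    have key : (Complex.exp (Real.pi * Complex.I * α₀) * Complex.exp (Real.pi * Complex.I * α₁) *
        Complex.exp (Real.pi * Complex.I * α₂) * Complex.exp (Real.pi * Complex.I * α₃)) *
      (Complex.exp (Real.pi * Complex.I * α₀) * Complex.exp (Real.pi * Complex.I * α₁) *
        Complex.exp (Real.pi * Complex.I * α₂) * Complex.exp (Real.pi * Complex.I * α₃)) =
        Complex.exp ((m : ℂ) * (2 * Real.pi * Complex.I)) := by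
      simp only [← Complex.exp_add]
      congr 1
      linear_combination (2 * (Real.pi : ℂ) * Complex.I) * hC
    rw [key]
    exact Complex.exp_int_mul_two_pi_mul_I m
  have hsin : ∀ x : ℝ, ((Real.sin (x * Real.pi) : ℝ) : ℂ) =
      ((Complex.exp (Real.pi * Complex.I * x))⁻¹ - Complex.exp (Real.pi * Complex.I * x)) *
        Complex.I / 2 := by
    intro x
    rw [Complex.ofReal_sin, Complex.sin, ← Complex.exp_neg]
    have ha : (-(↑(x * Real.pi)) * Complex.I : ℂ) = -(↑Real.pi * Complex.I * ↑x) := by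
      push_cast; ring
    have hb : ((↑(x * Real.pi) : ℂ) * Complex.I) = ↑Real.pi * Complex.I * ↑x := by
      push_cast; ring
    rw [ha, hb]
  have hs : ∀ x y : ℝ, Complex.exp (Real.pi * Complex.I * ((x + y : ℝ) : ℂ)) =
      Complex.exp (Real.pi * Complex.I * x) * Complex.exp (Real.pi * Complex.I * y) := by
    intro x y; rw [← Complex.exp_add]; congr 1; push_cast; ring
  have hq : ∀ x : ℝ, (∀ n : ℤ, x ≠ (n : ℝ)) →
      Complex.exp (Real.pi * Complex.I * x) * Complex.exp (Real.pi * Complex.I * x) ≠ 1 := by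
    intro x hx h
    rw [← h2 x, Complex.exp_eq_one_iff] at h
    obtain ⟨n, hn⟩ := h
    have h2πI : (2 * (Real.pi : ℂ) * Complex.I) ≠ 0 := by
      simp [Real.pi_ne_zero, Complex.I_ne_zero]
    have : (x : ℂ) * (2 * Real.pi * Complex.I) = (n : ℂ) * (2 * Real.pi * Complex.I) := by
      linear_combination hn
    exact hx n (by exact_mod_cast mul_right_cancel₀ h2πI this)
  have hq₁ := hq α₁ h₁
  have hq₂ := hq α₂ h₂
  have hq₃ := hq α₃ h₃
  have hne₀ : Complex.exp (Real.pi * Complex.I * (α₀ : ℂ)) ≠ 0 := Complex.exp_ne_zero _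
  have hne₁ : Complex.exp (Real.pi * Complex.I * (α₁ : ℂ)) ≠ 0 := Complex.exp_ne_zero _
  have hne₂ : Complex.exp (Real.pi * Complex.I * (α₂ : ℂ)) ≠ 0 := Complex.exp_ne_zero _
  have hne₃ : Complex.exp (Real.pi * Complex.I * (α₃ : ℂ)) ≠ 0 := Complex.exp_ne_zero _
  have hm₁ : (1:ℂ) - Complex.exp (Real.pi * Complex.I * (α₁ : ℂ)) *
      Complex.exp (Real.pi * Complex.I * (α₁ : ℂ)) ≠ 0 :=
    fun h => hq₁ (by linear_combination -h)
  have hm₂ : (1:ℂ) - Complex.exp (Real.pi * Complex.I * (α₂ : ℂ)) *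
      Complex.exp (Real.pi * Complex.I * (α₂ : ℂ)) ≠ 0 :=
    fun h => hq₂ (by linear_combination -h)
  have hm₃ : (1:ℂ) - Complex.exp (Real.pi * Complex.I * (α₃ : ℂ)) *
      Complex.exp (Real.pi * Complex.I * (α₃ : ℂ)) ≠ 0 :=
    fun h => hq₃ (by linear_combination -h)
  have hd₁ : (Complex.exp (Real.pi * Complex.I * (α₁ : ℂ)))⁻¹ -
      Complex.exp (Real.pi * Complex.I * (α₁ : ℂ)) ≠ 0 := by
    intro h; apply hq₁; field_simp at h; linear_combination -h
  have hd₂ : (Complex.exp (Real.pi * Complex.I * (α₂ : ℂ)))⁻¹ -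
      Complex.exp (Real.pi * Complex.I * (α₂ : ℂ)) ≠ 0 := by
    intro h; apply hq₂; field_simp at h; linear_combination -h
  have hd₃ : (Complex.exp (Real.pi * Complex.I * (α₃ : ℂ)))⁻¹ -
      Complex.exp (Real.pi * Complex.I * (α₃ : ℂ)) ≠ 0 := by
    intro h; apply hq₃; field_simp at h; linear_combination -h
  have hv₁ne : v₁ ≠ 0 := by
    rw [hv₁, h2]; intro h; exact hq₁ (by linear_combination -h)
  have hv₂ne : v₂ ≠ 0 := by
    rw [hv₂, h2, h2]
    refine mul_ne_zero (mul_ne_zero hne₁ hne₁) ?_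
    intro h; exact hq₂ (by linear_combination -h)
  have hv₃ne : v₃ ≠ 0 := by
    rw [hv₃, hE3']; intro h
    apply hq₃
    have := sub_eq_zero.mp h
    field_simp at this
    linear_combination -this
  have hm₁' : (1:ℂ) - Complex.exp (Real.pi * Complex.I * (α₁ : ℂ)) ^ 2 ≠ 0 := by rw [pow_two]; exact hm₁
  have hm₂' : (1:ℂ) - Complex.exp (Real.pi * Complex.I * (α₂ : ℂ)) ^ 2 ≠ 0 := by rw [pow_two]; exact hm₂
  have hm₃' : (1:ℂ) - Complex.exp (Real.pi * Complex.I * (α₃ : ℂ)) ^ 2 ≠ 0 := by rw [pow_two]; exact hm₃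
  refine ⟨hv₁ne, hv₂ne, hv₃ne, ?_, ?_, ?_⟩
  · rw [hv₁, hv₂, hv₃, hE0, hE0', hE3', h2 α₁, h2 α₂,
      Complex.ofReal_div, hsin, hsin, hs α₀ α₁]
    field_simp
    linear_combination hP
  · rw [hv₁, hv₂, hv₃, hE0, hE3', h2 α₁, h2 α₂,
      Complex.ofReal_div, hsin, hsin, hs α₀ α₂]
    field_simp
    linear_combination hP
  · rw [hv₁, hv₂, hv₃, hE0', hE3', h2 α₁, h2 α₂,
      Complex.ofReal_div, hsin, hsin, hs α₀ α₃]
    field_simp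
    linear_combination hP
end
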